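/- arXiv:quant-ph/0112086 — 9 statements merged into one kernel-verified Lean document; each statement's English description precedes it below -/
import Mathlib

section
/- For any polynomial q of degree d with sup-norm at most 1 on [-1,1], |q'(x)| ≤ d / √(1 - x²) for all x in the open interval (-1,1). -/
/-!
Put `x = cos θ`: the claim says that the trigonometric polynomial `T θ = q (cos θ)` of degree `d`
with `|T| ≤ 1` satisfies `|T'| ≤ d`. If `T' θ₀ > d`, take `c > 1` with `d c < T' θ₀` and a phase
`φ` such that `g θ = T θ - c sin (d θ + φ)` vanishes at `θ₀`; then `g' θ₀ > 0`. As `c > 1 ≥ |T|`,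
`g` alternates in sign at the `2d + 1` points of one period where `sin (d θ + φ) = ±1`, which
yields `2d - 1` zeros of `g`, and the sign of `g` around `θ₀` yields two more. But `e^{idθ} g θ`
is a polynomial of degree at most `2d` in `e^{iθ}`, so `g` has at most `2d` zeros in a period.
-/

open Polynomial Set Real
open Complex (I)
open scoped Complex

theorem exists_finset_zeros_of_alternating {f : ℝ → ℝ} (hf : Continuous f) {a : ℕ → ℝ}
    (ha : StrictMono a) {m : ℕ} (halt : ∀ j ≤ m, 0 < (-1) ^ j * f (a j)) :
    ∃ S : Finset ℝ, S.card = m ∧ ↑S ⊆ Ioo (a 0) (a m) ∧ ∀ x ∈ S, f x = 0 := by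
  induction m with
  | zero => exact ⟨∅, by simp⟩
  | succ m ih =>
    obtain ⟨S, hScard, hS, hSzero⟩ := ih fun j hj ↦ halt j (by omega)
    obtain ⟨z, hz, hfz⟩ : ∃ z ∈ Ioo (a m) (a (m + 1)), f z = 0 := by
      have h₀ := halt m (by omega)
      have h₁ := halt (m + 1) le_rfl
      have hcont := hf.continuousOn (s := Icc (a m) (a (m + 1)))
      have hle := (ha (Nat.lt_succ_self m)).le
      rw [pow_succ] at h₁
      rcases neg_one_pow_eq_or ℝ m with hm | hm <;> rw [hm] at h₀ h₁
      · exact intermediate_value_Ioo' hle hcont ⟨by linarith, by linarith⟩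
      · exact intermediate_value_Ioo hle hcont ⟨by linarith, by linarith⟩
    have hzS : z ∉ S := fun h ↦ (hS h).2.not_gt hz.1
    refine ⟨insert z S, by rw [Finset.card_insert_of_notMem hzS, hScard], ?_, ?_⟩
    · rw [Finset.coe_insert]
      refine insert_subset ⟨(ha.monotone (Nat.zero_le m)).trans_lt hz.1, hz.2⟩ ?_
      exact hS.trans (Ioo_subset_Ioo_right (ha (Nat.lt_succ_self m)).le)
    · simpa [hfz] using hSzero

theorem neg_one_pow_mul_sub_mul_sin_pos {a c : ℝ} (ha : |a| ≤ 1) (hc : 1 < c) (j : ℕ) :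
    0 < (-1) ^ j * (a - c * Real.sin (j * π - π / 2)) := by
  have hsq : ((-1 : ℝ) ^ j) * (-1) ^ j = 1 := by rw [← mul_pow]; norm_num
  have haj : |(-1) ^ j * a| ≤ 1 := by rwa [abs_mul, abs_pow, abs_neg, abs_one, one_pow, one_mul]
  rw [sin_sub_pi_div_two, cos_nat_mul_pi,
    show (-1 : ℝ) ^ j * (a - c * -(-1) ^ j) = (-1) ^ j * a + c * ((-1) ^ j * (-1) ^ j) by ring, hsq]
  linarith [(abs_le.1 haj).1]

/-- Real trigonometric polynomials of degree at most `n`, encoded through `z = e^{iθ}`. -/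
def IsTrigPolyDegLE (n : ℕ) (f : ℝ → ℝ) : Prop :=
  ∃ F : ℂ[X], F.natDegree ≤ 2 * n ∧ ∀ θ : ℝ, F.eval (cexp (θ * I)) = cexp (θ * I) ^ n * f θ

namespace IsTrigPolyDegLE

variable {n m : ℕ} {f g : ℝ → ℝ}

theorem const (a : ℝ) : IsTrigPolyDegLE 0 fun _ ↦ a :=
  ⟨C (a : ℂ), by simp, by simp⟩

theorem mono (hf : IsTrigPolyDegLE n f) (h : n ≤ m) : IsTrigPolyDegLE m f := by
  obtain ⟨F, hFdeg, hF⟩ := hf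
  refine ⟨F * X ^ (m - n), natDegree_mul_le.trans ?_, fun θ ↦ ?_⟩
  · have := natDegree_X_pow_le (R := ℂ) (m - n)
    omega
  · rw [eval_mul, hF, eval_pow, eval_X, ← Nat.add_sub_cancel' h, pow_add, Nat.add_sub_cancel_left]
    ring

theorem add (hf : IsTrigPolyDegLE n f) (hg : IsTrigPolyDegLE n g) : IsTrigPolyDegLE n (f + g) := by
  obtain ⟨F, hFdeg, hF⟩ := hf
  obtain ⟨G, hGdeg, hG⟩ := hg
  refine ⟨F + G, (natDegree_add_le _ _).trans (max_le hFdeg hGdeg), fun θ ↦ ?_⟩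
  rw [eval_add, hF, hG, Pi.add_apply, Complex.ofReal_add, mul_add]

theorem sub (hf : IsTrigPolyDegLE n f) (hg : IsTrigPolyDegLE n g) : IsTrigPolyDegLE n (f - g) := by
  obtain ⟨F, hFdeg, hF⟩ := hf
  obtain ⟨G, hGdeg, hG⟩ := hg
  refine ⟨F - G, (natDegree_sub_le _ _).trans (max_le hFdeg hGdeg), fun θ ↦ ?_⟩
  rw [eval_sub, hF, hG, Pi.sub_apply, Complex.ofReal_sub, mul_sub]

theorem mul (hf : IsTrigPolyDegLE n f) (hg : IsTrigPolyDegLE m g) :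
    IsTrigPolyDegLE (n + m) (f * g) := by
  obtain ⟨F, hFdeg, hF⟩ := hf
  obtain ⟨G, hGdeg, hG⟩ := hg
  refine ⟨F * G, natDegree_mul_le.trans (by omega), fun θ ↦ ?_⟩
  rw [eval_mul, hF, hG, Pi.mul_apply, Complex.ofReal_mul, pow_add]
  ring

theorem const_mul (a : ℝ) (hf : IsTrigPolyDegLE n f) : IsTrigPolyDegLE n fun θ ↦ a * f θ := by
  have := (const a).mul hf
  rwa [zero_add] at this

theorem pow (hf : IsTrigPolyDegLE n f) (k : ℕ) : IsTrigPolyDegLE (n * k) (f ^ k) := by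
  induction k with
  | zero => exact const 1
  | succ k ih => simpa only [pow_succ, Nat.mul_succ] using ih.mul hf

theorem sum {ι : Type*} {f : ι → ℝ → ℝ} (s : Finset ι) (hf : ∀ i ∈ s, IsTrigPolyDegLE n (f i)) :
    IsTrigPolyDegLE n fun θ ↦ ∑ i ∈ s, f i θ := by
  classical
  induction s using Finset.induction_on with
  | empty => simpa using (const 0).mono (Nat.zero_le n)
  | insert i s hi ih =>
    simp only [Finset.sum_insert hi]
    exact (hf i (s.mem_insert_self i)).add (ih fun j hj ↦ hf j (Finset.mem_insert_of_mem hj))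

theorem cos : IsTrigPolyDegLE 1 Real.cos := by
  refine ⟨C (1 / 2) * (X ^ 2 + 1), by compute_degree!, fun θ ↦ ?_⟩
  have hz : cexp (θ * I) ≠ 0 := Complex.exp_ne_zero _
  simp only [eval_mul, eval_C, eval_add, eval_pow, eval_X, eval_one, pow_one, Complex.ofReal_cos,
    Complex.cos, neg_mul, Complex.exp_neg]
  field_simp

theorem sin_nat_mul_add (k : ℕ) (φ : ℝ) : IsTrigPolyDegLE k fun θ ↦ Real.sin (k * θ + φ) := by
  refine ⟨C (cexp (φ * I) / (2 * I)) * X ^ (2 * k) - C (cexp (-(φ * I)) / (2 * I)),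
    by compute_degree!, fun θ ↦ ?_⟩
  have hz : cexp (θ * I) ≠ 0 := Complex.exp_ne_zero _
  have hkθ : cexp ((k * θ + φ : ℝ) * I) = cexp (θ * I) ^ k * cexp (φ * I) := by
    rw [← Complex.exp_nat_mul, ← Complex.exp_add]
    push_cast
    ring_nf
  simp only [eval_sub, eval_mul, eval_C, eval_pow, eval_X, Complex.ofReal_sin, Complex.sin,
    neg_mul, Complex.exp_neg, hkθ]
  field_simp
  ring_nf
  rw [Complex.I_sq]
  ring

theorem comp_cos (p : ℝ[X]) : IsTrigPolyDegLE p.natDegree fun θ ↦ p.eval (Real.cos θ) := by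
  simp_rw [eval_eq_sum_range]
  refine sum _ fun i hi ↦ ((const _).mul (cos.pow i)).mono ?_
  simpa [Nat.lt_succ_iff] using hi

theorem continuous (hf : IsTrigPolyDegLE n f) : Continuous f := by
  obtain ⟨F, -, hF⟩ := hf
  have hf : ∀ θ : ℝ, f θ = (cexp (-(θ * I)) ^ n * F.eval (cexp (θ * I))).re := by
    intro θ
    rw [hF, Complex.exp_neg, inv_pow,
      inv_mul_cancel_left₀ (pow_ne_zero _ (Complex.exp_ne_zero _)), Complex.ofReal_re]
  rw [_root_.funext hf]
  fun_prop

theorem card_le_of_forall_eq_zero (hf : IsTrigPolyDegLE n f) (hf0 : f ≠ 0) {a : ℝ}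
    {S : Finset ℝ} (hS : ↑S ⊆ Ico a (a + 2 * π)) (hzero : ∀ θ ∈ S, f θ = 0) :
    S.card ≤ 2 * n := by
  obtain ⟨F, hFdeg, hF⟩ := hf
  have hF0 : F ≠ 0 := by
    rintro rfl
    refine hf0 (_root_.funext fun θ ↦ ?_)
    simpa [Complex.exp_ne_zero] using (hF θ).symm
  have hinj : InjOn (fun θ : ℝ ↦ cexp (θ * I)) S := fun x hx y hy hxy ↦
    Circle.exp_injOn_Ico (by linarith) (hS hx) (hS hy) (Subtype.ext (by simpa [Circle.coe_exp]))
  calc S.card = (S.image fun θ : ℝ ↦ cexp (θ * I)).card := (Finset.card_image_of_injOn hinj).symm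
    _ ≤ F.natDegree := card_le_degree_of_subset_roots fun z hz ↦ by
        obtain ⟨θ, hθ, rfl⟩ := Finset.mem_image.1 hz
        rw [mem_roots hF0, IsRoot, hF, hzero θ hθ, Complex.ofReal_zero, mul_zero]
    _ ≤ 2 * n := hFdeg

theorem hasDerivAt_nonpos_of_alternating (hg : IsTrigPolyDegLE n g) (hn : 0 < n) {t : ℕ → ℝ}
    (ht : StrictMono t) (hper : t (2 * n) ≤ t 0 + 2 * π)
    (halt : ∀ j ≤ 2 * n, 0 < (-1) ^ j * g (t j)) {θ₀ L : ℝ} (hθ₀ : θ₀ ∈ Ioo (t 0) (t 1))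
    (hzero : g θ₀ = 0) (hL : HasDerivAt g L θ₀) : L ≤ 0 := by
  by_contra! hL₀
  have hcont := hg.continuous
  -- Besides `θ₀`, `g` has a zero in `(t 0, θ₀)` and `2 n - 1` zeros in `(t 1, t (2 n))`.
  have hg₀ : 0 < g (t 0) := by simpa using halt 0 (Nat.zero_le _)
  obtain ⟨s, hs, hgs⟩ : ∃ s ∈ Ioo (t 0) θ₀, g s < 0 := by
    have hsign := eventually_nhdsWithin_sign_eq_of_deriv_pos (hL.deriv ▸ hL₀) hzero
    obtain ⟨s, hsign, hs⟩ :=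
      ((hsign.filter_mono nhdsWithin_le_nhds).and (Ioo_mem_nhdsLT hθ₀.1)).exists
    rw [_root_.sign_neg (sub_neg.2 hs.2), sign_eq_neg_one_iff] at hsign
    exact ⟨s, hs, hsign⟩
  obtain ⟨z, hz, hgz⟩ : ∃ z ∈ Ioo (t 0) s, g z = 0 :=
    intermediate_value_Ioo' hs.1.le hcont.continuousOn ⟨hgs, hg₀⟩
  obtain ⟨S, hScard, hS, hSzero⟩ := exists_finset_zeros_of_alternating (f := fun x ↦ -g x)
    (a := fun j ↦ t (j + 1)) (m := 2 * n - 1) hcont.neg (fun _ _ h ↦ ht (by omega)) fun j hj ↦ by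
      have := halt (j + 1) (by omega)
      rw [pow_succ] at this
      linarith
  simp only [zero_add, Nat.sub_add_cancel (by omega : 1 ≤ 2 * n), neg_eq_zero] at hS hSzero
  have hθ₀S : θ₀ ∉ S := fun h ↦ (hS h).1.not_gt hθ₀.2
  have hzS : z ∉ insert θ₀ S := by
    rw [Finset.mem_insert, not_or]
    exact ⟨(hz.2.trans hs.2).ne, fun h ↦ (hS h).1.not_gt (hz.2.trans (hs.2.trans hθ₀.2))⟩
  have ht₁ : t 1 ≤ t (2 * n) := ht.monotone (by omega)
  have hcard := hg.card_le_of_forall_eq_zero (a := t 0) (S := insert z (insert θ₀ S))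
    (fun h ↦ hg₀.ne' (congrFun h (t 0)))
    (by
      simp only [Finset.coe_insert, insert_subset_iff]
      refine ⟨⟨hz.1.le, by linarith [hz.2, hs.2, hθ₀.2]⟩, ⟨hθ₀.1.le, by linarith [hθ₀.2]⟩, ?_⟩
      exact hS.trans fun x hx ↦ ⟨(ht zero_lt_one).le.trans hx.1.le, hx.2.trans_le hper⟩)
    (by simpa [hgz, hzero] using hSzero)
  rw [Finset.card_insert_of_notMem hzS, Finset.card_insert_of_notMem hθ₀S, hScard] at hcard
  omega

theorem le_of_hasDerivAt (hf : IsTrigPolyDegLE n f) (hn : 0 < n) (hf1 : ∀ θ, |f θ| ≤ 1)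
    {θ₀ D : ℝ} (hD : HasDerivAt f D θ₀) : D ≤ n := by
  by_contra! hnD
  have hn' : (0 : ℝ) < n := Nat.cast_pos.2 hn
  obtain ⟨c, hc₁, hnc⟩ : ∃ c : ℝ, 1 < c ∧ n * c < D := ⟨(n + D) / (2 * n), by
    rw [lt_div_iff₀ (by positivity)]; linarith, by field_simp; linarith⟩
  obtain ⟨α, hα, hsinα⟩ : ∃ α ∈ Ioo (-(π / 2)) (π / 2), Real.sin α = f θ₀ / c := by
    have hc₀ : 0 < c := by linarith
    have := abs_le.1 (hf1 θ₀)
    have h₁ : -1 < f θ₀ / c := by rw [lt_div_iff₀ hc₀]; linarith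
    have h₂ : f θ₀ / c < 1 := by rw [div_lt_iff₀ hc₀]; linarith
    exact ⟨arcsin (f θ₀ / c), ⟨neg_pi_div_two_lt_arcsin.2 h₁, arcsin_lt_pi_div_two.2 h₂⟩,
      sin_arcsin h₁.le h₂.le⟩
  set φ := α - n * θ₀
  set g : ℝ → ℝ := fun θ ↦ f θ - c * Real.sin (n * θ + φ)
  set t : ℕ → ℝ := fun j ↦ (j * π - π / 2 - φ) / n
  have hg : IsTrigPolyDegLE n g := hf.sub ((sin_nat_mul_add n φ).const_mul c)
  have harg : n * θ₀ + φ = α := by ring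
  have hg₀ : g θ₀ = 0 := by
    simp only [g, harg, hsinα]
    field_simp
    ring
  have hg' : HasDerivAt g (D - c * (Real.cos α * n)) θ₀ := by
    have hlin : HasDerivAt (fun θ : ℝ ↦ n * θ + φ) n θ₀ := by
      simpa using ((hasDerivAt_id θ₀).const_mul (n : ℝ)).add_const φ
    rw [← harg]
    exact hD.sub (hlin.sin.const_mul c)
  have ht : StrictMono t := fun i j hij ↦ by
    have : (i : ℝ) < j := Nat.cast_lt.2 hij
    exact div_lt_div_of_pos_right (by nlinarith [pi_pos]) hn'
  have hper : t (2 * n) ≤ t 0 + 2 * π := le_of_eq (by simp only [t]; field_simp; push_cast; ring)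
  have halt : ∀ j ≤ 2 * n, 0 < (-1) ^ j * g (t j) := by
    intro j _
    have hargj : n * t j + φ = j * π - π / 2 := by simp only [t]; field_simp; ring
    simpa only [g, hargj] using neg_one_pow_mul_sub_mul_sin_pos (hf1 (t j)) hc₁ j
  have hθ₀ : θ₀ ∈ Ioo (t 0) (t 1) := by
    constructor <;> simp only [t] <;> [rw [div_lt_iff₀ hn']; rw [lt_div_iff₀ hn']] <;>
      linarith [hα.1, hα.2]
  nlinarith [hg.hasDerivAt_nonpos_of_alternating hn ht hper halt hθ₀ hg₀ hg', cos_le_one α,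
    mul_pos (zero_lt_one.trans hc₁) hn']

end IsTrigPolyDegLE

theorem Polynomial.neg_sin_mul_derivative_eval_cos_le (p : ℝ[X]) (hp : 0 < p.natDegree)
    (hp1 : ∀ x ∈ Icc (-1 : ℝ) 1, |p.eval x| ≤ 1) (θ : ℝ) :
    -(Real.sin θ * p.derivative.eval (Real.cos θ)) ≤ p.natDegree := by
  refine (IsTrigPolyDegLE.comp_cos p).le_of_hasDerivAt hp
    (fun θ ↦ hp1 _ ⟨neg_one_le_cos θ, cos_le_one θ⟩) (θ₀ := θ) ?_
  rw [show -(Real.sin θ * p.derivative.eval (Real.cos θ)) =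
    p.derivative.eval (Real.cos θ) * -Real.sin θ by ring]
  exact (p.hasDerivAt (Real.cos θ)).comp θ (hasDerivAt_cos θ)

/-- Bernstein's inequality: a real polynomial of degree `d` bounded by 1 in sup-norm
on `[-1, 1]` satisfies `|q'(x)| ≤ d / √(1 - x²)` on `(-1, 1)`. -/
theorem bernstein_inequality (q : Polynomial ℝ) (d : ℕ) (hd : q.natDegree = d)
    (hq : ∀ x ∈ Set.Icc (-1 : ℝ) 1, |q.eval x| ≤ 1) :
    ∀ x ∈ Set.Ioo (-1 : ℝ) 1,
      |(Polynomial.derivative q).eval x| ≤ (d : ℝ) / Real.sqrt (1 - x ^ 2) := by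
  intro x ⟨hx₁, hx₂⟩
  have hsqrt : 0 < √(1 - x ^ 2) := Real.sqrt_pos.2 (by nlinarith)
  rw [le_div_iff₀ hsqrt]
  rcases Nat.eq_zero_or_pos d with rfl | hd₀
  · obtain ⟨a, rfl⟩ := natDegree_eq_zero.1 hd
    simp
  have hbound (p : ℝ[X]) (hp : p.natDegree = d) (hp1 : ∀ y ∈ Icc (-1 : ℝ) 1, |p.eval y| ≤ 1) :
      -(√(1 - x ^ 2) * p.derivative.eval x) ≤ d := by
    have := p.neg_sin_mul_derivative_eval_cos_le (hp ▸ hd₀) hp1 (arccos x)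
    rwa [sin_arccos, cos_arccos hx₁.le hx₂.le, hp] at this
  have h₁ := hbound q hd hq
  have h₂ := hbound (-q) (by rwa [natDegree_neg]) (by simpa using hq)
  rw [derivative_neg, eval_neg, mul_neg, neg_neg] at h₂
  have := abs_le.2 ⟨by linarith, h₂⟩
  rwa [abs_mul, abs_of_pos hsqrt, mul_comm] at this
end

section
/- Let q be a real polynomial of degree d, let a < b be integers, and let ξ ∈ [a,b] be real. If |q(i)| ≤ 1 for every integer i in [a,b], and |q(⌊ξ⌋) - q(ξ)| ≥ c > 0, then d ≥ C·√(b - a) for some constant C > 0 depending only on c. -/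
/-!
Bernstein–Markov argument. Write `J u = (u + u⁻¹) / 2` for the Joukowski map. If `|p| ≤ M` on
`[-1, 1]` and `deg p = d`, then `‖p (J u)‖ ≤ M ‖u‖ ^ d` for `‖u‖ ≥ 1`, by the maximum modulus
principle for the polynomial `w ^ d p (J w)` on the unit disc (`J` maps the unit circle onto
`[-1, 1]`). Since `J u` lies on the ellipse with foci `±1` and focal sum `‖u‖ + ‖u‖⁻¹`, points at
distance `1 / d²` from `[-1, 1]` have `‖u‖ ≤ 1 + 3 / d`, so `|p| ≤ e³ M` on circles of radius
`1 / d²` centred in `[-1, 1]`, and Cauchy's estimate gives `|p'| ≤ e³ d² M` there.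

Rescaled to `[a, b]`, `q` moves by at most `2 e³ d² M / (b - a)` over a unit step. If
`b - a > 4 e³ d²`, comparing the maximum of `|q|` with the sample at the integer just below its
argmax gives `M ≤ 2`, and then the jump `c` between `ξ` and `⌊ξ⌋` forces `b - a ≤ 4 e³ d² / c`.
-/

open Polynomial Complex Metric Set ComplexConjugate

lemma aeval_ofReal_eq_eval (p : ℝ[X]) (x : ℝ) : aeval (x : ℂ) p = ((p.eval x : ℝ) : ℂ) :=
  aeval_algebraMap_apply_eq_algebraMap_eval x p

noncomputable def joukowski (u : ℂ) : ℂ := (u + u⁻¹) / 2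

lemma joukowski_inv (u : ℂ) : joukowski u⁻¹ = joukowski u := by
  rw [joukowski, joukowski, inv_inv, add_comm]

lemma joukowski_of_norm_eq_one {u : ℂ} (hu : ‖u‖ = 1) : joukowski u = u.re := by
  have hinv : u⁻¹ = conj u := by
    rw [Complex.inv_def, Complex.normSq_eq_norm_sq, hu]; simp
  rw [joukowski, hinv, Complex.add_conj]; push_cast; ring

lemma norm_joukowski_sub_one_add_norm_joukowski_add_one {u : ℂ} (hu : u ≠ 0) :
    ‖joukowski u - 1‖ + ‖joukowski u + 1‖ = ‖u‖ + ‖u‖⁻¹ := by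
  have hsub : joukowski u - 1 = (u - 1) ^ 2 / (2 * u) := by
    rw [joukowski]; field_simp; ring
  have hadd : joukowski u + 1 = (u + 1) ^ 2 / (2 * u) := by
    rw [joukowski]; field_simp; ring
  have hpar := parallelogram_law_with_norm ℝ u 1
  have hu' : 0 < ‖u‖ := norm_pos_iff.mpr hu
  rw [norm_one] at hpar
  rw [hsub, hadd, norm_div, norm_div, norm_pow, norm_pow, norm_mul, Complex.norm_two]
  field_simp
  nlinarith [hpar]

lemma norm_add_inv_le_of_norm_joukowski_sub_le {u : ℂ} (hu : u ≠ 0) {x δ : ℝ}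
    (hx : x ∈ Icc (-1 : ℝ) 1) (hδ : ‖joukowski u - x‖ ≤ δ) : ‖u‖ + ‖u‖⁻¹ ≤ 2 + 2 * δ := by
  rw [← norm_joukowski_sub_one_add_norm_joukowski_add_one hu]
  have h1 := norm_sub_le (joukowski u - x) (1 - x)
  have h2 := norm_add_le (joukowski u - x) (x + 1)
  rw [sub_sub_sub_cancel_right] at h1
  rw [show joukowski u - x + (x + 1) = joukowski u + 1 by ring] at h2
  have hx1 : ‖(1 : ℂ) - x‖ + ‖(x : ℂ) + 1‖ = 2 := by
    rw [← ofReal_one, ← ofReal_sub, ← ofReal_add, norm_real, norm_real, Real.norm_eq_abs,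
      Real.norm_eq_abs, abs_of_nonneg (by linarith [hx.2]), abs_of_nonneg (by linarith [hx.1])]
    ring
  linarith

lemma exists_joukowski_eq (z : ℂ) : ∃ u : ℂ, 1 ≤ ‖u‖ ∧ joukowski u = z := by
  obtain ⟨u, hu⟩ : ∃ u : ℂ, 1 * (u * u) + (-2 * z) * u + 1 = 0 :=
    exists_quadratic_eq_zero one_ne_zero (IsAlgClosed.exists_eq_mul_self _)
  have hu0 : u ≠ 0 := by rintro rfl; simp at hu
  have hJ : joukowski u = z := by
    rw [joukowski]; field_simp; linear_combination hu
  rcases le_or_gt 1 ‖u‖ with h | h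
  · exact ⟨u, h, hJ⟩
  · refine ⟨u⁻¹, ?_, by rw [joukowski_inv, hJ]⟩
    rw [norm_inv]
    exact (one_le_inv₀ (norm_pos_iff.mpr hu0)).mpr h.le

noncomputable def joukowskiLift (p : ℝ[X]) : ℝ[X] :=
  ∑ k ∈ Finset.range (p.natDegree + 1),
    C (p.coeff k) * X ^ (p.natDegree - k) * (C 2⁻¹ * (X ^ 2 + 1)) ^ k

lemma aeval_joukowskiLift (p : ℝ[X]) {u : ℂ} (hu : u ≠ 0) :
    aeval u (joukowskiLift p) = u ^ p.natDegree * aeval (joukowski u) p := by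
  rw [joukowskiLift, map_sum, aeval_eq_sum_range (p := p), Finset.mul_sum]
  refine Finset.sum_congr rfl fun k hk => ?_
  have hkd : k ≤ p.natDegree := Nat.lt_succ_iff.mp (Finset.mem_range.mp hk)
  have hJ : (2 : ℂ)⁻¹ * (u ^ 2 + 1) = u * joukowski u := by
    rw [joukowski]; field_simp
  simp only [map_mul, map_pow, map_add, aeval_C, aeval_X, map_one, Algebra.smul_def]
  rw [show (algebraMap ℝ ℂ) 2⁻¹ = (2 : ℂ)⁻¹ by simp, hJ, mul_pow, ← pow_sub_mul_pow u hkd]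
  ring

lemma norm_aeval_joukowski_le {p : ℝ[X]} {M : ℝ} (hp : ∀ x ∈ Icc (-1 : ℝ) 1, |p.eval x| ≤ M)
    {u : ℂ} (hu : 1 ≤ ‖u‖) : ‖aeval (joukowski u) p‖ ≤ M * ‖u‖ ^ p.natDegree := by
  have hu0 : u ≠ 0 := norm_pos_iff.mp (by linarith)
  have hdisc : ‖aeval u⁻¹ (joukowskiLift p)‖ ≤ M := by
    refine Complex.norm_le_of_forall_mem_frontier_norm_le (isBounded_ball (x := (0 : ℂ)) (r := 1))
      (joukowskiLift p).differentiable_aeval.diffContOnCl (fun w hw => ?_)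
      (by rw [closure_ball _ one_ne_zero, mem_closedBall, dist_zero_right, norm_inv]
          exact inv_le_one_of_one_le₀ hu)
    rw [frontier_ball _ one_ne_zero, mem_sphere, dist_zero_right] at hw
    rw [aeval_joukowskiLift p (norm_pos_iff.mp (by linarith)), norm_mul, norm_pow, hw, one_pow,
      one_mul, joukowski_of_norm_eq_one hw, aeval_ofReal_eq_eval, norm_real, Real.norm_eq_abs]
    exact hp _ (abs_le.mp ((abs_re_le_norm w).trans hw.le))
  rw [aeval_joukowskiLift p (inv_ne_zero hu0), joukowski_inv, norm_mul, norm_pow, norm_inv,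
    inv_pow] at hdisc
  have hpow : 0 < ‖u‖ ^ p.natDegree := by positivity
  rwa [inv_mul_le_iff₀ hpow, mul_comm] at hdisc

lemma norm_aeval_le_exp_three_mul {p : ℝ[X]} {M : ℝ} (hp : ∀ x ∈ Icc (-1 : ℝ) 1, |p.eval x| ≤ M)
    (hd : p.natDegree ≠ 0) {x : ℝ} (hx : x ∈ Icc (-1 : ℝ) 1) {z : ℂ}
    (hz : ‖z - x‖ ≤ 1 / (p.natDegree : ℝ) ^ 2) : ‖aeval z p‖ ≤ Real.exp 3 * M := by
  obtain ⟨u, hu, rfl⟩ := exists_joukowski_eq z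
  set d : ℝ := (p.natDegree : ℝ)
  have hd1 : 1 ≤ d := by simpa [d, Nat.one_le_iff_ne_zero]
  have hu0 : u ≠ 0 := norm_pos_iff.mp (by linarith)
  have hfocal : ‖u‖ + ‖u‖⁻¹ ≤ 2 + 2 / d ^ 2 := by
    linarith [norm_add_inv_le_of_norm_joukowski_sub_le hu0 hx hz,
      show 2 / d ^ 2 = 2 * (1 / d ^ 2) by ring]
  have hr : ‖u‖ ≤ 1 + 3 / d := by
    -- with `s = d (‖u‖ - 1)`: `s² ≤ 2 ‖u‖ ≤ 2 + 2 s`, hence `s < 3`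
    have hpos : 0 < ‖u‖ := by linarith
    rw [← sub_nonneg] at hfocal ⊢
    have key : 0 ≤ (2 + 2 / d ^ 2 - (‖u‖ + ‖u‖⁻¹)) * ‖u‖ * d ^ 2 := by positivity
    field_simp at key ⊢
    nlinarith
  have hM : 0 ≤ M := (abs_nonneg _).trans (hp 0 (by norm_num))
  calc ‖aeval (joukowski u) p‖ ≤ M * ‖u‖ ^ p.natDegree := norm_aeval_joukowski_le hp hu
    _ ≤ M * (1 + 3 / d) ^ p.natDegree := by gcongr
    _ ≤ M * Real.exp 3 := by
        gcongr
        have := Real.one_sub_div_pow_le_exp_neg (n := p.natDegree) (t := -3) (by linarith)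
        rwa [neg_div, sub_neg_eq_add, neg_neg] at this
    _ = Real.exp 3 * M := mul_comm _ _

lemma abs_eval_derivative_le {p : ℝ[X]} {M : ℝ} (hp : ∀ x ∈ Icc (-1 : ℝ) 1, |p.eval x| ≤ M)
    {y : ℝ} (hy : y ∈ Icc (-1 : ℝ) 1) :
    |p.derivative.eval y| ≤ Real.exp 3 * p.natDegree ^ 2 * M := by
  rcases eq_or_ne p.natDegree 0 with hd | hd
  · rw [derivative_of_natDegree_zero hd, eval_zero, abs_zero, hd]
    simp
  have hR : (0 : ℝ) < 1 / (p.natDegree : ℝ) ^ 2 := by positivity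
  have hcauchy := Complex.norm_deriv_le_of_forall_mem_sphere_norm_le hR
    p.differentiable_aeval.diffContOnCl (fun z hz =>
      norm_aeval_le_exp_three_mul hp hd hy (by rw [mem_sphere, dist_eq_norm] at hz; exact hz.le))
  rwa [Polynomial.deriv_aeval, aeval_ofReal_eq_eval, norm_real, Real.norm_eq_abs, div_div_eq_mul_div,
    div_one, mul_right_comm] at hcauchy

lemma abs_eval_derivative_le_of_mem_Icc {p : ℝ[X]} {α β M : ℝ} (hαβ : α < β)
    (hp : ∀ x ∈ Icc α β, |p.eval x| ≤ M) {y : ℝ} (hy : y ∈ Icc α β) :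
    |p.derivative.eval y| ≤ 2 * Real.exp 3 * p.natDegree ^ 2 * M / (β - α) := by
  set l := (β - α) / 2 with hl_def
  set μ := (α + β) / 2 with hμ_def
  have hl : 0 < l := by rw [hl_def]; linarith
  set r := p.comp (C l * X + C μ)
  have hr : ∀ t ∈ Icc (-1 : ℝ) 1, |r.eval t| ≤ M := fun t ht => by
    simpa [r] using hp _ ⟨by nlinarith [ht.1], by nlinarith [ht.2]⟩
  have hdeg : r.natDegree = p.natDegree := by
    simp [r, natDegree_comp, natDegree_linear hl.ne']
  set t := (y - μ) / l
  have ht : t ∈ Icc (-1 : ℝ) 1 := by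
    constructor <;> [rw [le_div_iff₀ hl]; rw [div_le_iff₀ hl]] <;> linarith [hy.1, hy.2]
  have hyt : l * t + μ = y := by simp only [t]; field_simp; ring
  have hmarkov := abs_eval_derivative_le hr ht
  simp only [r, hdeg, derivative_comp, eval_mul, eval_comp, derivative_add, derivative_mul,
    derivative_C, derivative_X, eval_add, eval_C, eval_X, zero_mul, zero_add, add_zero,
    mul_one, hyt, abs_mul, abs_of_pos hl] at hmarkov
  rw [le_div_iff₀ (by linarith), show β - α = 2 * l by rw [hl_def]; ring]
  linarith

lemma abs_eval_sub_eval_le {p : ℝ[X]} {α β M : ℝ} (hαβ : α < β)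
    (hp : ∀ x ∈ Icc α β, |p.eval x| ≤ M) {y z : ℝ} (hy : y ∈ Icc α β) (hz : z ∈ Icc α β) :
    |p.eval y - p.eval z| ≤ 2 * Real.exp 3 * p.natDegree ^ 2 * M / (β - α) * |y - z| :=
  (convex_Icc α β).norm_image_sub_le_of_norm_deriv_le (fun _ _ => p.differentiableAt)
    (fun _ hx => by simpa using abs_eval_derivative_le_of_mem_Icc hαβ hp hx) hz hy

lemma abs_eval_floor_sub_eval_le {q : ℝ[X]} {a b : ℤ} {M : ℝ} (hab : (a : ℝ) < b)
    (hq : ∀ x ∈ Icc (a : ℝ) b, |q.eval x| ≤ M) {x : ℝ} (hx : x ∈ Icc (a : ℝ) b) :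
    |q.eval (⌊x⌋ : ℝ) - q.eval x| ≤ 2 * Real.exp 3 * q.natDegree ^ 2 * M / (b - a) := by
  have hfloor : (⌊x⌋ : ℝ) ∈ Icc (a : ℝ) b :=
    ⟨Int.cast_le.mpr (Int.le_floor.mpr hx.1), (Int.floor_le x).trans hx.2⟩
  have hdist : |(⌊x⌋ : ℝ) - x| ≤ 1 := by
    rw [abs_sub_comm, Int.self_sub_floor, abs_of_nonneg (Int.fract_nonneg x)]
    exact (Int.fract_lt_one x).le
  have hM : 0 ≤ M := (abs_nonneg _).trans (hq x hx)
  calc |q.eval (⌊x⌋ : ℝ) - q.eval x|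
      ≤ 2 * Real.exp 3 * q.natDegree ^ 2 * M / (b - a) * |(⌊x⌋ : ℝ) - x| :=
        abs_eval_sub_eval_le hab hq hfloor hx
    _ ≤ 2 * Real.exp 3 * q.natDegree ^ 2 * M / (b - a) := by
        have := sub_pos.mpr hab
        exact mul_le_of_le_one_right (by positivity) hdist

lemma abs_eval_le_two_of_abs_eval_intCast_le_one {q : ℝ[X]} {a b : ℤ}
    (hq : ∀ i : ℤ, a ≤ i → i ≤ b → |q.eval (i : ℝ)| ≤ 1)
    (hlen : 4 * Real.exp 3 * q.natDegree ^ 2 < b - a) :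
    ∀ x ∈ Icc (a : ℝ) b, |q.eval x| ≤ 2 := by
  have hab : (a : ℝ) < b := by linarith [show 0 ≤ 4 * Real.exp 3 * q.natDegree ^ 2 by positivity]
  obtain ⟨x₀, hx₀, hmax⟩ := isCompact_Icc.exists_isMaxOn (nonempty_Icc.mpr hab.le)
    (q.continuous.abs.continuousOn (s := Icc (a : ℝ) b))
  suffices |q.eval x₀| ≤ 2 from fun x hx => (hmax hx).trans this
  have hjump := abs_eval_floor_sub_eval_le hab (fun x hx => hmax hx) hx₀
  have hsample : |q.eval (⌊x₀⌋ : ℝ)| ≤ 1 :=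
    hq _ (Int.le_floor.mpr hx₀.1) (Int.cast_le.mp ((Int.floor_le x₀).trans hx₀.2))
  have hsmall : 2 * Real.exp 3 * q.natDegree ^ 2 * |q.eval x₀| / (b - a) ≤ |q.eval x₀| / 2 := by
    rw [div_le_iff₀ (by linarith)]
    nlinarith [abs_nonneg (q.eval x₀)]
  have htriangle := abs_sub_abs_le_abs_sub (q.eval x₀) (q.eval (⌊x₀⌋ : ℝ))
  rw [abs_sub_comm] at htriangle
  linarith

lemma sub_le_mul_natDegree_sq {q : ℝ[X]} {a b : ℤ} {ξ c : ℝ} (hc : 0 < c)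
    (hξ : ξ ∈ Icc (a : ℝ) b) (hq : ∀ i : ℤ, a ≤ i → i ≤ b → |q.eval (i : ℝ)| ≤ 1)
    (hjump : c ≤ |q.eval (⌊ξ⌋ : ℝ) - q.eval ξ|) :
    (b - a : ℝ) ≤ 4 * Real.exp 3 * (1 + 1 / c) * q.natDegree ^ 2 := by
  have hK : 0 ≤ 4 * Real.exp 3 * q.natDegree ^ 2 := by positivity
  have hKc : 0 ≤ 4 * Real.exp 3 * q.natDegree ^ 2 / c := by positivity
  have hsplit : 4 * Real.exp 3 * (1 + 1 / c) * q.natDegree ^ 2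
      = 4 * Real.exp 3 * q.natDegree ^ 2 + 4 * Real.exp 3 * q.natDegree ^ 2 / c := by ring
  rcases le_or_gt (b - a : ℝ) (4 * Real.exp 3 * q.natDegree ^ 2) with hlen | hlen
  · linarith
  have hab : (a : ℝ) < b := by linarith
  have hbound := abs_eval_floor_sub_eval_le hab (abs_eval_le_two_of_abs_eval_intCast_le_one hq hlen) hξ
  have hc' : c ≤ 4 * Real.exp 3 * q.natDegree ^ 2 / (b - a) :=
    hjump.trans (hbound.trans_eq (by ring))
  have : (b - a : ℝ) ≤ 4 * Real.exp 3 * q.natDegree ^ 2 / c := by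
    rw [le_div_iff₀ hc, mul_comm]
    rwa [le_div_iff₀ (by linarith)] at hc'
  linarith

/-- Weak form of Paturi's theorem: under the same hypotheses, `d = Ω(√(b - a))`. -/
theorem paturi_weak (c : ℝ) (hc : 0 < c) :
    ∃ C : ℝ, 0 < C ∧ ∀ (q : Polynomial ℝ) (d : ℕ) (a b : ℤ) (ξ : ℝ),
      q.natDegree = d → a < b → (a : ℝ) ≤ ξ → ξ ≤ (b : ℝ) →
      (∀ i : ℤ, a ≤ i → i ≤ b → |q.eval (i : ℝ)| ≤ 1) →
      c ≤ |q.eval ((⌊ξ⌋ : ℤ) : ℝ) - q.eval ξ| →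
      C * Real.sqrt ((b : ℝ) - (a : ℝ)) ≤ (d : ℝ) := by
  set K := 4 * Real.exp 3 * (1 + 1 / c)
  refine ⟨1 / √K, by positivity, fun q d a b ξ hd _ haξ hξb hq hjump => ?_⟩
  have hlen := sub_le_mul_natDegree_sq hc ⟨haξ, hξb⟩ hq hjump
  rw [hd] at hlen
  rw [div_mul_eq_mul_div, one_mul, div_le_iff₀ (by positivity)]
  calc √((b : ℝ) - a) ≤ √(K * d ^ 2) := Real.sqrt_le_sqrt hlen
    _ = d * √K := by rw [Real.sqrt_mul (by positivity), Real.sqrt_sq d.cast_nonneg, mul_comm]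
end

section
/- Let n be divisible by 4 and let f : Fin n → Fin n be such that exactly n/2 inputs are mapped two-to-one into the upper half {n/2, …, n-1} of the range, and the other n/2 inputs are mapped injectively into the lower half {0, …, n/2 - 1}. Define f̄ : Fin n → Fin (3n/2) by f̄(i) = i + n/2 if f(i) ≥ n/2, and f̄(i) = f(i) otherwise. Then f̄ is injective. -/
/-- Reduction lemma (injective case): if `f : Fin n → Fin n` maps `n/2` inputs
two-to-one into the upper half of the range and the other `n/2` inputs injectively into
the lower half, then `f̄(i) = i + n/2` if `f(i) ≥ n/2` and `f̄(i) = f(i)` otherwise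
is an injective function into `Fin (3n/2)`. -/
theorem fbar_injective (n : ℕ) (h4 : 4 ∣ n) (f : Fin n → Fin n)
    (hcard : (Finset.univ.filter (fun i => n / 2 ≤ (f i : ℕ))).card = n / 2)
    (htwo : ∀ i : Fin n, n / 2 ≤ (f i : ℕ) →
      (Finset.univ.filter (fun j => n / 2 ≤ (f j : ℕ) ∧ f j = f i)).card = 2)
    (hinj : ∀ i j : Fin n, (f i : ℕ) < n / 2 → (f j : ℕ) < n / 2 → f i = f j → i = j)
    (fbar : Fin n → Fin (n + n / 2))
    (hfbar : ∀ i : Fin n,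
      (fbar i : ℕ) = if n / 2 ≤ (f i : ℕ) then (i : ℕ) + n / 2 else (f i : ℕ)) :
    Function.Injective fbar := by
  intro i j hij
  have h : (fbar i : ℕ) = (fbar j : ℕ) := by rw [hij]
  rw [hfbar i, hfbar j] at h
  by_cases hi : n / 2 ≤ (f i : ℕ) <;> by_cases hj : n / 2 ≤ (f j : ℕ) <;>
    simp [hi, hj] at h
  · exact Fin.ext h
  · omega
  · omega
  · exact hinj i j (by omega) (by omega) (Fin.ext h)
end

section
/- Let n be divisible by 4 and let f : Fin n → Fin n be a two-to-one function such that n/2 of the inputs map into the upper half {n/2,…,n-1} and n/2 map into the lower half {0,…,n/2-1} (each half of inputs mapping two-to-one into its respective half of the range). Define f̄ : Fin n → Fin (3n/2) by f̄(i) = i + n/2 if f(i) ≥ n/2, else f̄(i) = f(i). Then f̄ restricted to inputs with f(i) < n/2 is two-to-one onto a subset of {0,…,n/2-1}, f̄ restricted to inputs with f(i) ≥ n/2 is injective into {n/2, …, 3n/2 - 1}, and the two images are disjoint; i.e., f̄ is half-two-to-one. -/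
/-- Reduction lemma (two-to-one case): if `f : Fin n → Fin n` is two-to-one, with `n/2`
inputs mapping into the upper half of the range and `n/2` into the lower half, then
`f̄(i) = i + n/2` if `f(i) ≥ n/2`, else `f̄(i) = f(i)`, is half-two-to-one: two-to-one
into the lower half on the lower inputs, injective into `{n/2, …, 3n/2 - 1}` on the
upper inputs, and the two images are disjoint. -/
theorem fbar_half_two_to_one (n : ℕ) (h4 : 4 ∣ n) (f : Fin n → Fin n)
    (htwo : ∀ i : Fin n, (Finset.univ.filter (fun j => f j = f i)).card = 2)
    (hcard : (Finset.univ.filter (fun i => n / 2 ≤ (f i : ℕ))).card = n / 2)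
    (fbar : Fin n → Fin (n + n / 2))
    (hfbar : ∀ i : Fin n,
      (fbar i : ℕ) = if n / 2 ≤ (f i : ℕ) then (i : ℕ) + n / 2 else (f i : ℕ)) :
    (∀ i : Fin n, (f i : ℕ) < n / 2 →
        (fbar i : ℕ) < n / 2 ∧
        (Finset.univ.filter (fun j => (f j : ℕ) < n / 2 ∧ fbar j = fbar i)).card = 2)
    ∧ (∀ i : Fin n, n / 2 ≤ (f i : ℕ) → n / 2 ≤ (fbar i : ℕ))
    ∧ (∀ i j : Fin n, n / 2 ≤ (f i : ℕ) → n / 2 ≤ (f j : ℕ) → fbar i = fbar j → i = j)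
    ∧ (∀ i j : Fin n, (f i : ℕ) < n / 2 → n / 2 ≤ (f j : ℕ) → fbar i ≠ fbar j) := by

  have hlow : ∀ i : Fin n, (f i : ℕ) < n / 2 → (fbar i : ℕ) = (f i : ℕ) := by
    intro i hi
    rw [hfbar i, if_neg (not_le.mpr hi)]
  have hhigh : ∀ i : Fin n, n / 2 ≤ (f i : ℕ) → (fbar i : ℕ) = (i : ℕ) + n / 2 := by
    intro i hi
    rw [hfbar i, if_pos hi]
  refine ⟨?_, ?_, ?_, ?_⟩
  · intro i hi
    refine ⟨by rw [hlow i hi]; exact hi, ?_⟩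
    have heq : (Finset.univ.filter (fun j => (f j : ℕ) < n / 2 ∧ fbar j = fbar i))
        = Finset.univ.filter (fun j => f j = f i) := by
      apply Finset.filter_congr
      intro j _
      constructor
      · rintro ⟨hj, hje⟩
        have : (f j : ℕ) = (f i : ℕ) := by
          rw [← hlow j hj, ← hlow i hi, hje]
        exact Fin.ext this
      · intro hje
        have hj : (f j : ℕ) < n / 2 := by rw [hje]; exact hi
        refine ⟨hj, Fin.ext ?_⟩
        rw [hlow j hj, hlow i hi, hje]
    rw [heq, htwo i]
  · intro i hi
    rw [hhigh i hi]; omega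
  · intro i j hi hj he
    have : (i : ℕ) + n / 2 = (j : ℕ) + n / 2 := by
      rw [← hhigh i hi, ← hhigh j hj, he]
    exact Fin.ext (by omega)
  · intro i j hi hj he
    have h1 := hlow i hi
    have h2 := hhigh j hj
    have : (fbar i : ℕ) = (fbar j : ℕ) := by rw [he]
    omega
end

section
/- Let n be even, let f : Fin n → Fin n be a fixed two-to-one function and let S be a uniformly random subset of Fin n of size k. If k ≥ c·√n for a sufficiently large constant c, then with probability at least 2/3 there exist distinct i, j ∈ S with f(i) = f(j). -/
open Finset

private def bpAA (n : ℕ) (f : Fin n → Fin n) (k : ℕ) : Finset (Finset (Fin n)) :=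
  (Finset.powersetCard k Finset.univ).filter (fun S => ∀ i ∈ S, ∀ j ∈ S, f i = f j → i = j)

private def bpExt (n : ℕ) (f : Fin n → Fin n) (S : Finset (Fin n)) : Finset (Fin n) :=
  Finset.univ.filter (fun x => ∀ i ∈ S, f x ≠ f i)

private lemma bp_ext_card {n : ℕ} {f : Fin n → Fin n}
    (hf : ∀ i : Fin n, (Finset.univ.filter (fun j => f j = f i)).card = 2)
    {S : Finset (Fin n)} (hInj : ∀ i ∈ S, ∀ j ∈ S, f i = f j → i = j) :
    2 * S.card ≤ n ∧ (bpExt n f S).card = n - 2 * S.card := by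
  set B : Finset (Fin n) := S.biUnion (fun i => Finset.univ.filter (fun j => f j = f i)) with hB
  have hdisj : ∀ x ∈ S, ∀ y ∈ S, x ≠ y →
      Disjoint (Finset.univ.filter (fun j => f j = f x))
        (Finset.univ.filter (fun j => f j = f y)) := by
    intro x hx y hy hxy
    rw [Finset.disjoint_left]
    intro a ha hb
    simp only [Finset.mem_filter] at ha hb
    exact hxy (hInj x hx y hy (ha.2 ▸ hb.2))
  have hcardB : B.card = 2 * S.card := by
    rw [hB, Finset.card_biUnion hdisj]
    simp only [hf]
    rw [Finset.sum_const, smul_eq_mul, mul_comm]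
  have hBle : 2 * S.card ≤ n := by
    have := Finset.card_le_card (Finset.subset_univ B)
    simpa [hcardB] using this
  refine ⟨hBle, ?_⟩
  have hExt : bpExt n f S = Finset.univ \ B := by
    ext x
    simp only [bpExt, Finset.mem_filter, Finset.mem_sdiff, Finset.mem_univ, true_and,
      hB, Finset.mem_biUnion]
    constructor
    · intro h hx
      obtain ⟨i, hi, hxi⟩ := hx
      exact h i hi hxi
    · intro h i hi hfx
      exact h ⟨i, hi, by simp [hfx]⟩
  rw [hExt, Finset.card_sdiff_of_subset (Finset.subset_univ B), hcardB, Finset.card_univ,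
    Fintype.card_fin]

private lemma bp_step {n : ℕ} {f : Fin n → Fin n}
    (hf : ∀ i : Fin n, (Finset.univ.filter (fun j => f j = f i)).card = 2) (k : ℕ) :
    (k + 1) * (bpAA n f (k + 1)).card ≤ (n - 2 * k) * (bpAA n f k).card := by
  classical
  set P : Finset ((_ : Finset (Fin n)) × Fin n) :=
    (bpAA n f (k + 1)).sigma (fun S => S) with hP
  set Q : Finset ((_ : Finset (Fin n)) × Fin n) :=
    (bpAA n f k).sigma (fun S => bpExt n f S) with hQ
  have hcardP : P.card = (k + 1) * (bpAA n f (k + 1)).card := by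
    rw [hP, Finset.card_sigma]
    have : ∀ S ∈ bpAA n f (k + 1), S.card = k + 1 := by
      intro S hS
      have := (Finset.mem_filter.mp hS).1
      exact (Finset.mem_powersetCard.mp this).2
    rw [Finset.sum_congr rfl this, Finset.sum_const, smul_eq_mul, mul_comm]
  have hcardQ : Q.card = (n - 2 * k) * (bpAA n f k).card := by
    rw [hQ, Finset.card_sigma]
    have : ∀ S ∈ bpAA n f k, (bpExt n f S).card = n - 2 * k := by
      intro S hS
      have hm := Finset.mem_filter.mp hS
      have hcard := (Finset.mem_powersetCard.mp hm.1).2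
      have := (bp_ext_card hf hm.2).2
      rw [this, hcard]
    rw [Finset.sum_congr rfl this, Finset.sum_const, smul_eq_mul, mul_comm]
  rw [← hcardP, ← hcardQ]
  apply Finset.card_le_card_of_injOn (fun p => ⟨p.1.erase p.2, p.2⟩)
  · rintro ⟨S, x⟩ hp
    rw [Finset.mem_coe, hP, Finset.mem_sigma] at hp
    obtain ⟨hS, hx⟩ := hp
    have hm := Finset.mem_filter.mp hS
    have hcard := (Finset.mem_powersetCard.mp hm.1).2
    have hInj := hm.2
    rw [Finset.mem_coe, hQ, Finset.mem_sigma]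
    constructor
    · rw [bpAA, Finset.mem_filter]
      constructor
      · rw [Finset.mem_powersetCard]
        exact ⟨Finset.subset_univ _, by rw [Finset.card_erase_of_mem hx, hcard]; rfl⟩
      · intro i hi j hj hij
        exact hInj i (Finset.mem_of_mem_erase hi) j (Finset.mem_of_mem_erase hj) hij
    · rw [bpExt, Finset.mem_filter]
      refine ⟨Finset.mem_univ _, ?_⟩
      intro i hi hfi
      have hiS := Finset.mem_of_mem_erase hi
      have : x = i := hInj x hx i hiS hfi
      exact (Finset.ne_of_mem_erase hi) this.symm
  · rintro ⟨S₁, x₁⟩ h₁ ⟨S₂, x₂⟩ h₂ heq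
    simp only [Finset.mem_coe, hP, Finset.mem_sigma] at h₁ h₂
    simp only [Sigma.mk.inj_iff, heq_eq_eq] at heq
    obtain ⟨hS, hx⟩ := heq
    subst hx
    have hSS : S₁ = S₂ := by
      have e1 : insert x₁ (S₁.erase x₁) = S₁ := Finset.insert_erase h₁.2
      have e2 : insert x₁ (S₂.erase x₁) = S₂ := Finset.insert_erase h₂.2
      rw [← e1, ← e2, hS]
    simp [hSS]

private lemma bp_ratio {n : ℕ} {f : Fin n → Fin n}
    (hf : ∀ i : Fin n, (Finset.univ.filter (fun j => f j = f i)).card = 2) :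
    ∀ k : ℕ, 2 * k ≤ n →
    ((bpAA n f k).card : ℝ) ≤
      (n.choose k : ℝ) * ∏ i ∈ Finset.range k, (((n : ℝ) - 2 * i) / ((n : ℝ) - i)) := by
  intro k
  induction k with
  | zero =>
    intro _
    simp only [Finset.range_zero, Finset.prod_empty, Nat.choose_zero_right, Nat.cast_one,
      mul_one]
    have : (bpAA n f 0).card ≤ (Finset.powersetCard 0 (Finset.univ : Finset (Fin n))).card :=
      Finset.card_filter_le _ _
    simp only [Finset.card_powersetCard, Nat.choose_zero_right] at this
    exact_mod_cast this
  | succ k ih =>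
    intro hk1
    have hk : 2 * k ≤ n := by omega
    have ih' := ih hk
    have hstep := bp_step hf k
    have hkn : k < n := by omega
    -- positivity facts
    have hnk : (0 : ℝ) < (n : ℝ) - k := by
      have : (k : ℝ) < n := by exact_mod_cast hkn
      linarith
    have hprod_nonneg : 0 ≤ ∏ i ∈ Finset.range k, (((n : ℝ) - 2 * i) / ((n : ℝ) - i)) := by
      apply Finset.prod_nonneg
      intro i hi
      have hik : i < k := Finset.mem_range.mp hi
      have h2i : (2 : ℝ) * i ≤ n := by
        have : 2 * i ≤ n := by omega
        exact_mod_cast this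
      have hin : (i : ℝ) < n := by
        have : i < n := by omega
        exact_mod_cast this
      apply div_nonneg <;> linarith
    -- cast step
    have hstepR : ((k : ℝ) + 1) * ((bpAA n f (k + 1)).card : ℝ) ≤
        ((n : ℝ) - 2 * k) * ((bpAA n f k).card : ℝ) := by
      have h2k : (2 * k : ℕ) ≤ n := hk
      have := hstep
      have hcast : ((n - 2 * k : ℕ) : ℝ) = (n : ℝ) - 2 * k := by
        push_cast [Nat.cast_sub h2k]; ring
      calc ((k : ℝ) + 1) * ((bpAA n f (k + 1)).card : ℝ)
          = (((k + 1) * (bpAA n f (k + 1)).card : ℕ) : ℝ) := by push_cast; ring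
        _ ≤ (((n - 2 * k) * (bpAA n f k).card : ℕ) : ℝ) := by exact_mod_cast hstep
        _ = ((n : ℝ) - 2 * k) * ((bpAA n f k).card : ℝ) := by rw [Nat.cast_mul, hcast]
    -- choose identity
    have hchoose : (n.choose k : ℝ) * ((n : ℝ) - k) = (n.choose (k + 1) : ℝ) * ((k : ℝ) + 1) := by
      have := Nat.choose_succ_right_eq n k
      have hcast : ((n - k : ℕ) : ℝ) = (n : ℝ) - k := by
        rw [Nat.cast_sub (le_of_lt hkn)]
      calc (n.choose k : ℝ) * ((n : ℝ) - k) = (((n.choose k) * (n - k) : ℕ) : ℝ) := by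
            rw [Nat.cast_mul, hcast]
        _ = (((n.choose (k + 1)) * (k + 1) : ℕ) : ℝ) := by rw [← this]
        _ = (n.choose (k + 1) : ℝ) * ((k : ℝ) + 1) := by push_cast; ring
    have h2kR : (0 : ℝ) ≤ (n : ℝ) - 2 * k := by
      have : (2 * k : ℝ) ≤ n := by exact_mod_cast hk
      push_cast at this ⊢; linarith
    have hk1pos : (0 : ℝ) < (k : ℝ) + 1 := by positivity
    rw [Finset.prod_range_succ]
    have key : ((k : ℝ) + 1) * ((n : ℝ) - k) * ((bpAA n f (k + 1)).card : ℝ) ≤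
        ((k : ℝ) + 1) * ((n : ℝ) - k) *
          ((n.choose (k + 1) : ℝ) *
            ((∏ i ∈ Finset.range k, (((n : ℝ) - 2 * i) / ((n : ℝ) - i))) *
              (((n : ℝ) - 2 * k) / ((n : ℝ) - k)))) := by
      have step2 : ((k : ℝ) + 1) * ((n : ℝ) - k) * ((bpAA n f (k + 1)).card : ℝ) ≤
          ((n : ℝ) - k) * (((n : ℝ) - 2 * k) * ((bpAA n f k).card : ℝ)) := by
        nlinarith [hstepR, hnk]
      have step3 : ((n : ℝ) - k) * (((n : ℝ) - 2 * k) * ((bpAA n f k).card : ℝ)) ≤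
          ((n : ℝ) - k) * (((n : ℝ) - 2 * k) *
            ((n.choose k : ℝ) * ∏ i ∈ Finset.range k, (((n : ℝ) - 2 * i) / ((n : ℝ) - i)))) := by
        apply mul_le_mul_of_nonneg_left _ (le_of_lt hnk)
        exact mul_le_mul_of_nonneg_left ih' h2kR
      have step4 : ((n : ℝ) - k) * (((n : ℝ) - 2 * k) *
            ((n.choose k : ℝ) * ∏ i ∈ Finset.range k, (((n : ℝ) - 2 * i) / ((n : ℝ) - i)))) =
          ((k : ℝ) + 1) * ((n : ℝ) - k) *
          ((n.choose (k + 1) : ℝ) *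
            ((∏ i ∈ Finset.range k, (((n : ℝ) - 2 * i) / ((n : ℝ) - i))) *
              (((n : ℝ) - 2 * k) / ((n : ℝ) - k)))) := by
        have hne : ((n : ℝ) - k) ≠ 0 := ne_of_gt hnk
        have h1 : ((k : ℝ) + 1) * ((n : ℝ) - k) *
            ((n.choose (k + 1) : ℝ) *
              ((∏ i ∈ Finset.range k, (((n : ℝ) - 2 * i) / ((n : ℝ) - i))) *
                (((n : ℝ) - 2 * k) / ((n : ℝ) - k)))) =
            ((n.choose (k + 1) : ℝ) * ((k : ℝ) + 1)) *
              ((∏ i ∈ Finset.range k, (((n : ℝ) - 2 * i) / ((n : ℝ) - i))) *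
                (((n : ℝ) - 2 * k) * (((n : ℝ) - k) / ((n : ℝ) - k)))) := by
          ring
        rw [h1, div_self hne, mul_one, ← hchoose]
        ring
      linarith [step2, step3.trans_eq step4]
    have hpos : (0 : ℝ) < ((k : ℝ) + 1) * ((n : ℝ) - k) := by positivity
    exact le_of_mul_le_mul_left key hpos

private lemma bp_prod_le {n k : ℕ} (hn : 0 < n) (h2k : 2 * k ≤ n) :
    ∏ i ∈ Finset.range k, (((n : ℝ) - 2 * i) / ((n : ℝ) - i)) ≤
      Real.exp (-((∑ i ∈ Finset.range k, (i : ℝ)) / n)) := by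
  have hnR : (0 : ℝ) < n := by exact_mod_cast hn
  have key : ∀ i ∈ Finset.range k, ((n : ℝ) - 2 * i) / ((n : ℝ) - i) ≤
      Real.exp (-((i : ℝ) / n)) := by
    intro i hi
    have hik : i < k := Finset.mem_range.mp hi
    have h2i : (2 : ℝ) * i ≤ n := by
      have : 2 * i ≤ n := by omega
      exact_mod_cast this
    have hin : (i : ℝ) < n := by
      have : i < n := by omega
      exact_mod_cast this
    have hni : (0 : ℝ) < (n : ℝ) - i := by linarith
    have hiN : (0 : ℝ) ≤ (i : ℝ) := Nat.cast_nonneg i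
    have h1 : ((n : ℝ) - 2 * i) / ((n : ℝ) - i) ≤ 1 - (i : ℝ) / n := by
      rw [div_le_iff₀ hni]
      have h2 : (i : ℝ) * ((n : ℝ) - i) / n ≤ i := by
        rw [div_le_iff₀ hnR]
        nlinarith
      have h3 : (1 - (i : ℝ) / n) * ((n : ℝ) - i) = ((n : ℝ) - i) - (i : ℝ) * ((n : ℝ) - i) / n := by
        field_simp
      rw [h3]
      linarith
    have h2 := Real.add_one_le_exp (-((i : ℝ) / n))
    linarith
  calc ∏ i ∈ Finset.range k, (((n : ℝ) - 2 * i) / ((n : ℝ) - i))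
      ≤ ∏ i ∈ Finset.range k, Real.exp (-((i : ℝ) / n)) := by
        apply Finset.prod_le_prod _ key
        intro i hi
        have hik : i < k := Finset.mem_range.mp hi
        have h2i : (2 : ℝ) * i ≤ n := by
          have : 2 * i ≤ n := by omega
          exact_mod_cast this
        have hin : (i : ℝ) < n := by
          have : i < n := by omega
          exact_mod_cast this
        apply div_nonneg <;> linarith
    _ = Real.exp (∑ i ∈ Finset.range k, -((i : ℝ) / n)) := (Real.exp_sum _ _).symm
    _ = Real.exp (-((∑ i ∈ Finset.range k, (i : ℝ)) / n)) := by
        congr 1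
        rw [Finset.sum_neg_distrib, Finset.sum_div]

private lemma bp_main {n k : ℕ} {f : Fin n → Fin n} (hn : 0 < n)
    (hf : ∀ i : Fin n, (Finset.univ.filter (fun j => f j = f i)).card = 2)
    (hck : 4 * Real.sqrt n ≤ k) (hkn : k ≤ n) :
    3 * ((bpAA n f k).card : ℝ) ≤ (n.choose k : ℝ) := by
  -- k ≥ 4 and k² ≥ 16 n
  have hsq : (1 : ℝ) ≤ Real.sqrt n := by
    rw [show (1:ℝ) = Real.sqrt 1 by simp]
    apply Real.sqrt_le_sqrt
    exact_mod_cast hn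
  have hk4 : 4 ≤ k := by
    have : (4 : ℝ) ≤ k := le_trans (by linarith) hck
    exact_mod_cast this
  have hk2 : 16 * (n : ℝ) ≤ (k : ℝ) ^ 2 := by
    have h0 : (0 : ℝ) ≤ 4 * Real.sqrt n := by positivity
    have := mul_self_le_mul_self h0 hck
    have hs : Real.sqrt n * Real.sqrt n = n := Real.mul_self_sqrt (Nat.cast_nonneg n)
    nlinarith
  have hk2n : 16 * n ≤ k ^ 2 := by exact_mod_cast hk2
  by_cases h2k : 2 * k ≤ n
  · -- main case
    have hA := bp_ratio hf k h2k
    have hP := bp_prod_le hn h2k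
    -- sum bound: ∑ i = k(k-1)/2 ≥ 6n
    have hk4R : (4 : ℝ) ≤ (k : ℝ) := by exact_mod_cast hk4
    have hgauss : (∑ i ∈ Finset.range k, (i : ℝ)) * 2 = (k : ℝ) * ((k : ℝ) - 1) := by
      have h := Finset.sum_range_id_mul_two k
      have hc : ((k - 1 : ℕ) : ℝ) = (k : ℝ) - 1 := by
        rw [Nat.cast_sub (by omega : 1 ≤ k)]; simp
      calc (∑ i ∈ Finset.range k, (i : ℝ)) * 2
          = (((∑ i ∈ Finset.range k, i) * 2 : ℕ) : ℝ) := by push_cast; ring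
        _ = ((k * (k - 1) : ℕ) : ℝ) := by rw [h]
        _ = (k : ℝ) * ((k : ℝ) - 1) := by rw [Nat.cast_mul, hc]
    have hsumR : 6 * (n : ℝ) ≤ (∑ i ∈ Finset.range k, (i : ℝ)) := by
      nlinarith [hk2, hk4R, hgauss]
    have hnR : (0 : ℝ) < n := by exact_mod_cast hn
    have hexp : Real.exp (-((∑ i ∈ Finset.range k, (i : ℝ)) / n)) ≤ Real.exp (-6) := by
      apply Real.exp_le_exp.mpr
      have : (6 : ℝ) ≤ (∑ i ∈ Finset.range k, (i : ℝ)) / n := by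
        rw [le_div_iff₀ hnR]; linarith
      linarith
    have hexp3 : Real.exp (-6 : ℝ) ≤ 1 / 3 := by
      rw [Real.exp_neg]
      have h7 : (7 : ℝ) ≤ Real.exp 6 := by
        have := Real.add_one_le_exp (6 : ℝ)
        linarith
      have hpos : (0 : ℝ) < Real.exp 6 := Real.exp_pos 6
      rw [inv_le_iff_one_le_mul₀ hpos] -- may not exist; fallback below
      linarith
    have : ((bpAA n f k).card : ℝ) ≤ (n.choose k : ℝ) * (1 / 3) := by
      calc ((bpAA n f k).card : ℝ) ≤ (n.choose k : ℝ) *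
            ∏ i ∈ Finset.range k, (((n : ℝ) - 2 * i) / ((n : ℝ) - i)) := hA
        _ ≤ (n.choose k : ℝ) * (1 / 3) := by
            apply mul_le_mul_of_nonneg_left _ (Nat.cast_nonneg _)
            exact le_trans hP (le_trans hexp hexp3)
    linarith
  · -- 2k > n : bpAA is empty
    have hempty : (bpAA n f k).card = 0 := by
      rw [Finset.card_eq_zero]
      by_contra hne
      obtain ⟨S, hS⟩ := Finset.nonempty_iff_ne_empty.mpr hne
      have hm := Finset.mem_filter.mp hS
      have hcard := (Finset.mem_powersetCard.mp hm.1).2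
      have := (bp_ext_card hf hm.2).1
      omega
    rw [hempty, Nat.cast_zero, mul_zero]
    exact Nat.cast_nonneg _

/-- Birthday-paradox reduction: for a two-to-one `f : Fin n → Fin n` and a uniformly
random subset `S` of size `k ≥ c√n` (`c` a sufficiently large constant), with
probability at least `2/3` there are distinct `i, j ∈ S` with `f i = f j`. -/
theorem birthday_random_subset :
    ∃ c : ℝ, 0 < c ∧ ∀ (n k : ℕ) (f : Fin n → Fin n), 0 < n →
      (∀ i : Fin n, (Finset.univ.filter (fun j => f j = f i)).card = 2) →
      c * Real.sqrt (n : ℝ) ≤ (k : ℝ) → k ≤ n →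
      (2 : ℝ) / 3 ≤
        (((Finset.powersetCard k (Finset.univ : Finset (Fin n))).filter
            (fun S => ∃ i ∈ S, ∃ j ∈ S, i ≠ j ∧ f i = f j)).card : ℝ) /
          ((Finset.powersetCard k (Finset.univ : Finset (Fin n))).card : ℝ) := by
  refine ⟨4, by norm_num, ?_⟩
  intro n k f hn hf hck hkn
  classical
  have hmain := bp_main hn hf hck hkn
  set P := Finset.powersetCard k (Finset.univ : Finset (Fin n)) with hPdef
  have hCP : P.card = n.choose k := by
    rw [hPdef, Finset.card_powersetCard, Finset.card_univ, Fintype.card_fin]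
  have hCpos : 0 < P.card := by
    rw [hCP]; exact Nat.choose_pos hkn
  have hsplit : (P.filter (fun S => ∃ i ∈ S, ∃ j ∈ S, i ≠ j ∧ f i = f j)).card +
      (P.filter (fun S => ¬ ∃ i ∈ S, ∃ j ∈ S, i ≠ j ∧ f i = f j)).card = P.card :=
    Finset.card_filter_add_card_filter_not _
  have hAeq : P.filter (fun S => ¬ ∃ i ∈ S, ∃ j ∈ S, i ≠ j ∧ f i = f j) = bpAA n f k := by
    rw [bpAA]
    apply Finset.filter_congr
    intro S _
    constructor
    · intro h i hi j hj hij
      by_contra hne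
      exact h ⟨i, hi, j, hj, hne, hij⟩
    · rintro h ⟨i, hi, j, hj, hne, hij⟩
      exact hne (h i hi j hj hij)
  rw [hAeq] at hsplit
  have hCposR : (0 : ℝ) < (P.card : ℝ) := by exact_mod_cast hCpos
  rw [le_div_iff₀ hCposR]
  have hA3 : 3 * ((bpAA n f k).card : ℝ) ≤ (P.card : ℝ) := by rw [hCP]; exact_mod_cast hmain
  have hsplitR : ((P.filter (fun S => ∃ i ∈ S, ∃ j ∈ S, i ≠ j ∧ f i = f j)).card : ℝ) +
      ((bpAA n f k).card : ℝ) = (P.card : ℝ) := by exact_mod_cast hsplit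
  linarith
end

section
/- Let f : Fin n → Fin n be two-to-one and let S be a uniformly random subset of Fin n of size k. The probability that no two distinct elements of S collide under f is at most ∏_{i=0}^{k-1} (1 - i/(n - i)) ≤ exp(-k(k-1)/(2n)). -/
private lemma sum_range_cast_real (K : ℕ) :
    (∑ i ∈ Finset.range K, (i : ℝ)) = K * (K - 1) / 2 := by
  induction K with
  | zero => simp
  | succ K ih => rw [Finset.sum_range_succ, ih]; push_cast; ring

/-- Quantitative birthday bound: for a two-to-one `f : Fin n → Fin n` and a uniformly
random `k`-subset `S` (with `2k ≤ n`), the probability that no two distinct elements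
of `S` collide under `f` is at most `∏_{i<k} (1 - i/(n-i))`, which is at most
`exp(-k(k-1)/(2n))`. -/
theorem birthday_quantitative (n k : ℕ) (hn : 0 < n) (f : Fin n → Fin n)
    (htwo : ∀ i : Fin n, (Finset.univ.filter (fun j => f j = f i)).card = 2)
    (hk : 2 * k ≤ n) :
    (((Finset.powersetCard k (Finset.univ : Finset (Fin n))).filter
        (fun S => ∀ i ∈ S, ∀ j ∈ S, f i = f j → i = j)).card : ℝ) /
        ((Finset.powersetCard k (Finset.univ : Finset (Fin n))).card : ℝ)
      ≤ ∏ i ∈ Finset.range k, (1 - (i : ℝ) / ((n : ℝ) - (i : ℝ)))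
    ∧ ∏ i ∈ Finset.range k, (1 - (i : ℝ) / ((n : ℝ) - (i : ℝ)))
      ≤ Real.exp (-((k : ℝ) * ((k : ℝ) - 1)) / (2 * (n : ℝ))) := by
  classical
  -- basic facts about each factor
  have hfactor : ∀ i ∈ Finset.range k,
      (0 : ℝ) ≤ 1 - (i : ℝ) / ((n : ℝ) - i) := by
    intro i hi
    rw [Finset.mem_range] at hi
    have hni : (0 : ℝ) < (n : ℝ) - i := by
      have : (i : ℝ) < n := by exact_mod_cast (by omega : i < n)
      linarith
    have h1 : (i : ℝ) / ((n : ℝ) - i) ≤ 1 := by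
      rw [div_le_one hni]
      have : (2 * i : ℝ) ≤ n := by exact_mod_cast (by omega : 2 * i ≤ n)
      linarith
    linarith
  constructor
  · -- counting part
    set s := (Finset.powersetCard k (Finset.univ : Finset (Fin n))).filter
        (fun S => ∀ i ∈ S, ∀ j ∈ S, f i = f j → i = j) with hs
    set V : Finset (Fin n) := Finset.univ.image f with hV
    set m := V.card with hm
    have hfib : ∀ v ∈ V, (Finset.univ.filter (fun j => f j = v)).card = 2 := by
      intro v hv
      obtain ⟨i, -, rfl⟩ := Finset.mem_image.1 hv
      exact htwo i
    have hnm : n = 2 * m := by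
      have h := Finset.card_eq_sum_card_fiberwise
        (f := f) (s := (Finset.univ : Finset (Fin n))) (t := V)
        (fun a _ => Finset.mem_image_of_mem f (Finset.mem_univ a))
      rw [Finset.card_univ, Fintype.card_fin, Finset.sum_congr rfl hfib,
        Finset.sum_const, smul_eq_mul] at h
      omega
    have hkm : k ≤ m := by omega
    -- canonical element of each fiber
    set g : Fin n → Fin n := fun v =>
      if h : (Finset.univ.filter (fun j => f j = v)).Nonempty
      then (Finset.univ.filter (fun j => f j = v)).min' h else v with hg
    have hgmem : ∀ a : Fin n, f (g (f a)) = f a := by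
      intro a
      have h : (Finset.univ.filter (fun j => f j = f a)).Nonempty := ⟨a, by simp⟩
      simp only [hg, dif_pos h]
      have := Finset.min'_mem _ h
      simpa using this
    -- bound on the fibers of S ↦ S.image f
    have hfibers : ∀ T ∈ s.image (fun S => S.image f),
        (s.filter (fun S => S.image f = T)).card ≤ 2 ^ k := by
      intro T hT
      obtain ⟨S₀, hS₀, rfl⟩ := Finset.mem_image.1 hT
      have hS₀' := Finset.mem_filter.1 hS₀
      have hS₀k : S₀.card = k := (Finset.mem_powersetCard.1 hS₀'.1).2
      have hTk : (S₀.image f).card = k := by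
        rw [Finset.card_image_of_injOn, hS₀k]
        intro a ha b hb hab
        exact hS₀'.2 a ha b hb hab
      set T := S₀.image f
      -- injection into subsets of T
      have hsub : ∀ S₁ ∈ s.filter (fun S => S.image f = T),
          ∀ S₂ ∈ s.filter (fun S => S.image f = T),
          T.filter (fun v => g v ∈ S₁) = T.filter (fun v => g v ∈ S₂) → S₁ ⊆ S₂ := by
        intro S₁ hS₁ S₂ hS₂ hUeq a ha
        have h₁ := Finset.mem_filter.1 hS₁
        have h₂ := Finset.mem_filter.1 hS₂
        have hinj₁ := (Finset.mem_filter.1 h₁.1).2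
        have hinj₂ := (Finset.mem_filter.1 h₂.1).2
        have hvT : f a ∈ T := by
          rw [← h₁.2]; exact Finset.mem_image_of_mem f ha
        have hvV : f a ∈ V := Finset.mem_image_of_mem f (Finset.mem_univ a)
        by_cases hax : a = g (f a)
        · -- a is the canonical element of its fiber
          have hmem : f a ∈ T.filter (fun v => g v ∈ S₁) :=
            Finset.mem_filter.2 ⟨hvT, by rw [← hax]; exact ha⟩
          rw [hUeq] at hmem
          have := (Finset.mem_filter.1 hmem).2
          rwa [← hax] at this
        · -- the fiber is {g (f a), a}
          have hfa : f (g (f a)) = f a := hgmem a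
          have hfiber2 : (Finset.univ.filter (fun j => f j = f a)).card = 2 := htwo a
          have hsubset : ({g (f a), a} : Finset (Fin n)) ⊆
              Finset.univ.filter (fun j => f j = f a) := by
            intro b hb
            rcases Finset.mem_insert.1 hb with rfl | hb
            · simp [hfa]
            · simp [Finset.mem_singleton.1 hb]
          have hpair : ({g (f a), a} : Finset (Fin n)).card = 2 := by
            rw [Finset.card_insert_of_notMem (by simp [Ne.symm hax]),
              Finset.card_singleton]
          have hfibeq : Finset.univ.filter (fun j => f j = f a) = {g (f a), a} :=
            (Finset.eq_of_subset_of_card_le hsubset (by rw [hfiber2, hpair])).symm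
          -- g (f a) ∉ S₁
          have hnot₁ : g (f a) ∉ S₁ := by
            intro hgmem₁
            exact hax (hinj₁ a ha (g (f a)) hgmem₁ hfa.symm)
          have hnotU : f a ∉ T.filter (fun v => g v ∈ S₁) := by
            intro hmem
            exact hnot₁ (Finset.mem_filter.1 hmem).2
          rw [hUeq] at hnotU
          have hnot₂ : g (f a) ∉ S₂ := fun hc => hnotU (Finset.mem_filter.2 ⟨hvT, hc⟩)
          -- f a ∈ T = S₂.image f, so some b ∈ S₂ with f b = f a
          have : f a ∈ S₂.image f := by rw [h₂.2]; exact hvT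
          obtain ⟨b, hb, hfb⟩ := Finset.mem_image.1 this
          have hbfiber : b ∈ ({g (f a), a} : Finset (Fin n)) := by
            rw [← hfibeq]; simp [hfb]
          rcases Finset.mem_insert.1 hbfiber with rfl | hb'
          · exact absurd hb hnot₂
          · rwa [← Finset.mem_singleton.1 hb']
      have hinjOn : ∀ S₁ ∈ s.filter (fun S => S.image f = T),
          ∀ S₂ ∈ s.filter (fun S => S.image f = T),
          T.filter (fun v => g v ∈ S₁) = T.filter (fun v => g v ∈ S₂) → S₁ = S₂ := by
        intro S₁ h₁ S₂ h₂ h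
        exact Finset.Subset.antisymm (hsub S₁ h₁ S₂ h₂ h) (hsub S₂ h₂ S₁ h₁ h.symm)
      calc (s.filter (fun S => S.image f = T)).card
          ≤ T.powerset.card := by
            apply Finset.card_le_card_of_injOn (fun S => T.filter (fun v => g v ∈ S))
            · intro S _; exact Finset.mem_powerset.2 (Finset.filter_subset _ _)
            · exact fun S₁ h₁ S₂ h₂ h => hinjOn S₁ h₁ S₂ h₂ h
        _ = 2 ^ k := by rw [Finset.card_powerset, hTk]
    -- the image lies in k-subsets of V
    have himage : s.image (fun S => S.image f) ⊆ Finset.powersetCard k V := by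
      intro T hT
      obtain ⟨S₀, hS₀, rfl⟩ := Finset.mem_image.1 hT
      have hS₀' := Finset.mem_filter.1 hS₀
      have hS₀k : S₀.card = k := (Finset.mem_powersetCard.1 hS₀'.1).2
      refine Finset.mem_powersetCard.2 ⟨?_, ?_⟩
      · intro v hv
        obtain ⟨a, -, rfl⟩ := Finset.mem_image.1 hv
        exact Finset.mem_image_of_mem f (Finset.mem_univ a)
      · rw [Finset.card_image_of_injOn (fun a ha b hb hab => hS₀'.2 a ha b hb hab), hS₀k]
    have hcount : s.card ≤ 2 ^ k * m.choose k := by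
      calc s.card ≤ 2 ^ k * (s.image (fun S => S.image f)).card :=
            Finset.card_le_mul_card_image s (2 ^ k) hfibers
        _ ≤ 2 ^ k * (Finset.powersetCard k V).card :=
            Nat.mul_le_mul_left _ (Finset.card_le_card himage)
        _ = 2 ^ k * m.choose k := by rw [Finset.card_powersetCard]
    -- total count
    have htotal : (Finset.powersetCard k (Finset.univ : Finset (Fin n))).card
        = n.choose k := by
      rw [Finset.card_powersetCard, Finset.card_univ, Fintype.card_fin]
    have hc0 : (0 : ℝ) < (n.choose k : ℝ) := by
      exact_mod_cast Nat.choose_pos (by omega : k ≤ n)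
    -- the key algebraic identity
    have hkey : (∏ i ∈ Finset.range k, (1 - (i : ℝ) / ((n : ℝ) - i))) * (n.choose k : ℝ)
        = (2 : ℝ) ^ k * (m.choose k : ℝ) := by
      have hfac : (0 : ℝ) < (k.factorial : ℝ) := by exact_mod_cast k.factorial_pos
      have hdn : ((n.descFactorial k : ℕ) : ℝ) = ∏ i ∈ Finset.range k, ((n : ℝ) - i) := by
        rw [Nat.descFactorial_eq_prod_range]
        push_cast
        refine Finset.prod_congr rfl fun i hi => ?_
        rw [Finset.mem_range] at hi
        rw [Nat.cast_sub (by omega : i ≤ n)]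
      have hdm : ((m.descFactorial k : ℕ) : ℝ) = ∏ i ∈ Finset.range k, ((m : ℝ) - i) := by
        rw [Nat.descFactorial_eq_prod_range]
        push_cast
        refine Finset.prod_congr rfl fun i hi => ?_
        rw [Finset.mem_range] at hi
        rw [Nat.cast_sub (by omega : i ≤ m)]
      have hcn : (k.factorial : ℝ) * (n.choose k : ℝ) = ∏ i ∈ Finset.range k, ((n : ℝ) - i) := by
        rw [← hdn, Nat.descFactorial_eq_factorial_mul_choose]; push_cast; ring
      have hcm : (k.factorial : ℝ) * (m.choose k : ℝ) = ∏ i ∈ Finset.range k, ((m : ℝ) - i) := by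
        rw [← hdm, Nat.descFactorial_eq_factorial_mul_choose]; push_cast; ring
      have hcancel : (k.factorial : ℝ) * ((∏ i ∈ Finset.range k, (1 - (i : ℝ) / ((n : ℝ) - i)))
          * (n.choose k : ℝ)) = (k.factorial : ℝ) * ((2 : ℝ) ^ k * (m.choose k : ℝ)) := by
        calc (k.factorial : ℝ) * ((∏ i ∈ Finset.range k, (1 - (i : ℝ) / ((n : ℝ) - i)))
              * (n.choose k : ℝ))
            = (∏ i ∈ Finset.range k, (1 - (i : ℝ) / ((n : ℝ) - i)))
              * ((k.factorial : ℝ) * (n.choose k : ℝ)) := by ring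
          _ = (∏ i ∈ Finset.range k, (1 - (i : ℝ) / ((n : ℝ) - i)))
              * ∏ i ∈ Finset.range k, ((n : ℝ) - i) := by rw [hcn]
          _ = ∏ i ∈ Finset.range k, ((1 - (i : ℝ) / ((n : ℝ) - i)) * ((n : ℝ) - i)) := by
              rw [Finset.prod_mul_distrib]
          _ = ∏ i ∈ Finset.range k, (2 * ((m : ℝ) - i)) := by
              refine Finset.prod_congr rfl fun i hi => ?_
              rw [Finset.mem_range] at hi
              have hni : ((n : ℝ) - i) ≠ 0 := by
                have : (i : ℝ) < n := by exact_mod_cast (by omega : i < n)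
                linarith
              have hnn : (n : ℝ) = 2 * m := by exact_mod_cast hnm
              field_simp
              rw [hnn]; ring
          _ = (2 : ℝ) ^ k * ∏ i ∈ Finset.range k, ((m : ℝ) - i) := by
              rw [Finset.prod_mul_distrib, Finset.prod_const, Finset.card_range]
          _ = (2 : ℝ) ^ k * ((k.factorial : ℝ) * (m.choose k : ℝ)) := by rw [hcm]
          _ = (k.factorial : ℝ) * ((2 : ℝ) ^ k * (m.choose k : ℝ)) := by ring
      exact mul_left_cancel₀ (ne_of_gt hfac) hcancel
    rw [htotal, div_le_iff₀ hc0, hkey]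
    exact_mod_cast hcount
  · -- exponential bound
    have hstep : ∀ i ∈ Finset.range k,
        1 - (i : ℝ) / ((n : ℝ) - i) ≤ Real.exp (-((i : ℝ) / n)) := by
      intro i hi
      rw [Finset.mem_range] at hi
      have hni : (0 : ℝ) < (n : ℝ) - i := by
        have : (i : ℝ) < n := by exact_mod_cast (by omega : i < n)
        linarith
      have hn0 : (0 : ℝ) < (n : ℝ) := by exact_mod_cast hn
      have h1 : (i : ℝ) / n ≤ (i : ℝ) / ((n : ℝ) - i) :=
        div_le_div_of_nonneg_left (by positivity) hni (by linarith)
      have h2 : -((i : ℝ) / n) + 1 ≤ Real.exp (-((i : ℝ) / n)) :=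
        Real.add_one_le_exp _
      linarith
    calc ∏ i ∈ Finset.range k, (1 - (i : ℝ) / ((n : ℝ) - i))
        ≤ ∏ i ∈ Finset.range k, Real.exp (-((i : ℝ) / n)) :=
          Finset.prod_le_prod hfactor hstep
      _ = Real.exp (∑ i ∈ Finset.range k, -((i : ℝ) / n)) := (Real.exp_sum _ _).symm
      _ = Real.exp (-((k : ℝ) * ((k : ℝ) - 1)) / (2 * (n : ℝ))) := by
          congr 1
          have hn0 : (n : ℝ) ≠ 0 := by positivity
          rw [show (∑ i ∈ Finset.range k, -((i : ℝ) / n))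
              = -((∑ i ∈ Finset.range k, (i : ℝ)) / n) by
            rw [Finset.sum_neg_distrib, ← Finset.sum_div]]
          rw [sum_range_cast_real]
          field_simp
end

section
/- For a uniformly random r-to-one function f : Fin n → Fin N (r ≥ 2, r ∣ n) and any fixed set T of k distinct queried inputs, the probability that all k values f(i), i ∈ T, are distinct is at most exp(-(r-1)·k(k-1)/(2n)). Hence if k ≥ c·√(n/r) for suitable c, a collision among the queried values occurs with probability ≥ 2/3. -/
/-!
Count pairs `(e, f)` of an embedding `e : T ↪ Fin n` and an `r`-to-one `f` with `f ∘ e`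
injective in two ways. Precomposing with a permutation of `Fin n` permutes the `r`-to-one
functions and carries any embedding of `T` to any other, so each `e` contributes as many `f` as
the inclusion of `T` does. Conversely each `f` has `n / r` values, each with `r` preimages, so
it admits `(n / r)(n / r - 1) ⋯ (n / r - k + 1) · r ^ k` such `e`. The probability is therefore
`∏_{i < k} (n - i r) / (n - i)`, and each factor is at most
`1 - (r - 1) i / n ≤ exp (-(r - 1) i / n)`.
-/

open Finset Function

theorem sum_range_natCast_id (k : ℕ) : ∑ i ∈ range k, (i : ℝ) = k * (k - 1) / 2 := by
  induction k with
  | zero => simp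
  | succ k ih => rw [sum_range_succ, ih]; push_cast; ring

theorem natCast_sub_mul_div_natCast_sub_le_exp {n r : ℕ} (hr : 0 < r) (i : ℕ) :
    ((n - i * r : ℕ) : ℝ) / (n - i : ℕ) ≤ Real.exp (-((r - 1) * i) / n) := by
  rcases le_or_gt n (i * r) with hn | hn
  · rw [Nat.sub_eq_zero_of_le hn, Nat.cast_zero, zero_div]
    exact (Real.exp_pos _).le
  have hin : i < n := lt_of_le_of_lt (Nat.le_mul_of_pos_right i hr) hn
  have hn' : (0 : ℝ) < n := by exact_mod_cast (i.zero_le.trans_lt hin)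
  have hr' : (1 : ℝ) ≤ r := by exact_mod_cast hr
  rw [Nat.cast_sub hn.le, Nat.cast_sub hin.le, Nat.cast_mul, neg_div]
  have hgap : (1 - ((r : ℝ) - 1) * i / n) * (n - i) = n - i * r + (r - 1) * i ^ 2 / n := by
    field_simp; ring
  calc ((n : ℝ) - i * r) / (n - i) ≤ 1 - (r - 1) * i / n := by
        rw [div_le_iff₀ (by simpa using hin), hgap]
        have : 0 ≤ ((r : ℝ) - 1) * i ^ 2 / n :=
          div_nonneg (mul_nonneg (by linarith) (sq_nonneg _)) hn'.le
        linarith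
    _ ≤ Real.exp (-((r - 1) * i / n)) := Real.one_sub_le_exp_neg _

theorem descFactorial_div_mul_pow_div_descFactorial_le_exp {n r : ℕ} (hr : 0 < r) (hd : r ∣ n)
    (k : ℕ) :
    (((n / r).descFactorial k * r ^ k : ℕ) : ℝ) / n.descFactorial k ≤
      Real.exp (-((r - 1) * k * (k - 1)) / (2 * n)) := by
  have hprod : (n / r).descFactorial k * r ^ k = ∏ i ∈ range k, (n - i * r) := by
    rw [Nat.descFactorial_eq_prod_range, pow_eq_prod_const, ← prod_mul_distrib]
    exact prod_congr rfl fun i _ => by rw [Nat.sub_mul, Nat.div_mul_cancel hd]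
  rw [hprod, Nat.descFactorial_eq_prod_range, Nat.cast_prod, Nat.cast_prod, ← prod_div_distrib]
  calc _ ≤ ∏ i ∈ range k, Real.exp (-((r - 1) * i) / n) :=
        prod_le_prod (fun _ _ => by positivity)
          fun i _ => natCast_sub_mul_div_natCast_sub_le_exp hr i
    _ = Real.exp (-((r - 1) * k * (k - 1)) / (2 * n)) := by
        rw [← Real.exp_sum, ← sum_div, sum_neg_distrib, ← mul_sum, sum_range_natCast_id]
        congr 1; ring

section Counting

variable {α β ι : Type*} [Fintype α] [DecidableEq β]

def IsRToOne (r : ℕ) (f : α → β) : Prop :=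
  ∀ y, (∃ x, f x = y) → #{x | f x = y} = r

instance [Fintype β] (r : ℕ) : DecidablePred (IsRToOne (α := α) (β := β) r) := fun f =>
  inferInstanceAs (Decidable (∀ y, (∃ x, f x = y) → #{x | f x = y} = r))

namespace IsRToOne

variable {r : ℕ} {f : α → β}

theorem comp_perm (hf : IsRToOne r f) (σ : Equiv.Perm α) : IsRToOne r (f ∘ σ) := by
  rintro y ⟨x, rfl⟩
  rw [← hf _ ⟨σ x, rfl⟩]
  exact card_equiv σ (by simp)

theorem card_image_mul (hf : IsRToOne r f) : #(univ.image f) * r = Fintype.card α := by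
  rw [← card_univ, card_eq_sum_card_image f univ, sum_const_nat]
  rintro y hy
  obtain ⟨x, -, rfl⟩ := mem_image.1 hy
  exact hf _ ⟨x, rfl⟩

theorem card_embedding_injective_comp [DecidableEq α] [Fintype ι] [DecidableEq ι]
    (hf : IsRToOne r f) :
    #{e : ι ↪ α | Injective (f ∘ e)} =
      (#(univ.image f)).descFactorial (Fintype.card ι) * r ^ Fintype.card ι := by
  let restrict : {e : ι ↪ α // Injective (f ∘ e)} → (ι ↪ Set.range f) := fun e =>
    ⟨Set.rangeFactorization f ∘ e.1, fun a b h => e.2 (congrArg Subtype.val h)⟩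
  have fiber (h : ι ↪ Set.range f) : {e // restrict e = h} ≃ ∀ u, {x // f x = h u} :=
    { toFun := fun e u => ⟨e.1.1 u, congrArg Subtype.val (DFunLike.congr_fun e.2 u)⟩
      invFun := fun s =>
        have hs : Injective (f ∘ fun u => (s u).1) := fun a b hab =>
          h.injective <| Subtype.ext <| (s a).2.symm.trans (hab.trans (s b).2)
        ⟨⟨⟨fun u => (s u).1, hs.of_comp⟩, hs⟩, DFunLike.ext _ _ fun u => Subtype.ext (s u).2⟩
      left_inv := fun e => rfl
      right_inv := fun s => rfl }
  have fiber_card (h : ι ↪ Set.range f) (u : ι) : Fintype.card {x // f x = h u} = r := by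
    obtain ⟨_, x, hx⟩ := h u
    rw [Fintype.card_subtype]; exact hf _ ⟨x, hx⟩
  rw [← Fintype.card_subtype, Fintype.card_congr (Equiv.sigmaFiberEquiv restrict).symm,
    Fintype.card_sigma]
  simp_rw [Fintype.card_congr (fiber _), Fintype.card_pi, fiber_card]
  rw [prod_const, sum_const, card_univ, card_univ, Fintype.card_embedding_eq,
    ← Set.toFinset_range, Set.toFinset_card, smul_eq_mul]

end IsRToOne

theorem card_filter_injective_comp_embedding_eq [DecidableEq α] [Fintype β] [Fintype ι]
    [DecidableEq ι] {P : (α → β) → Prop} [DecidablePred P]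
    (hP : ∀ f (σ : Equiv.Perm α), P f → P (f ∘ σ)) (e e' : ι ↪ α) :
    #{f | P f ∧ Injective (f ∘ e)} = #{f | P f ∧ Injective (f ∘ e')} := by
  obtain ⟨σ, hσ⟩ := Equiv.Perm.exists_extending_pair e e' e.injective e'.injective
  have hσe : ⇑σ.symm ∘ e' = e := funext fun u => by simp [← hσ]
  refine card_equiv (σ.arrowCongr (.refl β)) fun f => ?_
  simp only [mem_filter_univ]
  change _ ↔ P (f ∘ σ.symm) ∧ Injective (f ∘ σ.symm ∘ e')
  have hPσ : P (f ∘ σ.symm) ↔ P f :=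
    ⟨fun h => by simpa [comp_assoc] using hP _ σ h, hP f σ.symm⟩
  rw [hPσ, hσe]

theorem card_isRToOne_injective_comp_mul_descFactorial [DecidableEq α] [Fintype β]
    [Fintype ι] [DecidableEq ι] {r : ℕ} (hr : 0 < r) (e : ι ↪ α) :
    #{f : α → β | IsRToOne r f ∧ Injective (f ∘ e)} *
        (Fintype.card α).descFactorial (Fintype.card ι) =
      #{f : α → β | IsRToOne r f} *
        ((Fintype.card α / r).descFactorial (Fintype.card ι) * r ^ Fintype.card ι) := by
  set F : Finset (α → β) := {f | IsRToOne r f}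
  have double_count := sum_card_bipartiteAbove_eq_sum_card_bipartiteBelow
    (s := univ) (t := F) (r := fun (e : ι ↪ α) (f : α → β) => Injective (f ∘ e))
  simp only [bipartiteAbove, bipartiteBelow] at double_count
  have per_embedding (e' : ι ↪ α) :
      #{f ∈ F | Injective (f ∘ e')} = #{f : α → β | IsRToOne r f ∧ Injective (f ∘ e)} := by
    rw [filter_filter]
    exact card_filter_injective_comp_embedding_eq (fun f σ hf => hf.comp_perm σ) e' e
  have per_function (f : α → β) (hf : f ∈ F) :
      #{e' : ι ↪ α | Injective (f ∘ e')} =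
        (Fintype.card α / r).descFactorial (Fintype.card ι) * r ^ Fintype.card ι := by
    have hf : IsRToOne r f := (mem_filter_univ _).1 hf
    rw [hf.card_embedding_injective_comp, ← hf.card_image_mul, Nat.mul_div_cancel _ hr]
  rw [sum_congr rfl fun e' _ => per_embedding e', sum_congr rfl per_function, sum_const,
    sum_const, card_univ, Fintype.card_embedding_eq, smul_eq_mul, smul_eq_mul] at double_count
  rw [mul_comm, double_count]

theorem card_isRToOne_injOn_div_le_exp [DecidableEq α] [Fintype β] {r : ℕ} (hr : 0 < r)
    (hd : r ∣ Fintype.card α) (T : Finset α) :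
    (#{f : α → β | IsRToOne r f ∧ ∀ i ∈ T, ∀ j ∈ T, f i = f j → i = j} : ℝ) /
        #{f : α → β | IsRToOne r f} ≤
      Real.exp (-((r - 1) * #T * (#T - 1)) / (2 * Fintype.card α)) := by
  have hcount := card_isRToOne_injective_comp_mul_descFactorial (β := β) hr
    (Embedding.subtype (· ∈ T))
  have hinj (f : α → β) : Injective (f ∘ Embedding.subtype (· ∈ T)) ↔
      ∀ i ∈ T, ∀ j ∈ T, f i = f j → i = j :=
    ⟨fun h i hi j hj hij => congrArg Subtype.val (@h ⟨i, hi⟩ ⟨j, hj⟩ hij),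
      fun h a b hab => Subtype.ext (h _ a.2 _ b.2 hab)⟩
  simp only [hinj, Fintype.card_coe] at hcount
  have hI : (0 : ℝ) < (Fintype.card α).descFactorial #T := by
    exact_mod_cast Nat.descFactorial_pos.2 (card_le_univ T)
  refine le_trans ?_ (descFactorial_div_mul_pow_div_descFactorial_le_exp hr hd #T)
  rcases eq_or_ne #{f : α → β | IsRToOne r f} 0 with hF | hF
  · rw [hF, Nat.cast_zero, div_zero]; positivity
  rw [div_le_div_iff₀ (by positivity) hI]
  exact_mod_cast (hcount.trans (mul_comm _ _)).le

end Counting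

theorem four_mul_le_sub_one_mul_mul_sub_one {n r k : ℝ} (hr : 2 ≤ r) (hrn : r ≤ n)
    (hk : 4 * √(n / r) ≤ k) : 4 * n ≤ (r - 1) * k * (k - 1) := by
  have hr0 : 0 < r := by linarith
  have hk4 : 4 ≤ k := by
    have : 1 ≤ √(n / r) := Real.one_le_sqrt.2 ((one_le_div hr0).2 hrn)
    linarith
  have hsq : 16 * n ≤ r * k ^ 2 := by
    have h := pow_le_pow_left₀ (by positivity) hk 2
    rw [mul_pow, Real.sq_sqrt (div_nonneg (by linarith) hr0.le)] at h
    have := mul_le_mul_of_nonneg_left h hr0.le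
    rw [mul_left_comm, mul_div_cancel₀ _ hr0.ne'] at this
    linarith
  have : r / 2 * (k / 2) ≤ (r - 1) * (k - 1) :=
    mul_le_mul (by linarith) (by linarith) (by linarith) (by linarith)
  nlinarith

theorem two_thirds_le_one_sub_of_le_exp {n r k : ℕ} {p : ℝ} (hn : 0 < n) (hr : 2 ≤ r)
    (hd : r ∣ n) (hp : p ≤ Real.exp (-((r - 1) * k * (k - 1)) / (2 * n)))
    (hk : 4 * √((n : ℝ) / r) ≤ k) : 2 / 3 ≤ 1 - p := by
  have hn' : (0 : ℝ) < n := by exact_mod_cast hn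
  have hexponent := four_mul_le_sub_one_mul_mul_sub_one (by exact_mod_cast hr)
    (by exact_mod_cast Nat.le_of_dvd hn hd) hk
  have hle : -((r - 1) * k * (k - 1)) / (2 * n) ≤ (-2 : ℝ) := by
    rw [div_le_iff₀ (by positivity)]; linarith
  have hexp2 : Real.exp (-2) ≤ 1 / 3 := by
    rw [Real.exp_neg, one_div]
    exact inv_anti₀ (by norm_num) (by linarith [Real.add_one_le_exp 2])
  linarith [Real.exp_le_exp.2 hle]

/-- For a uniformly random `r`-to-one function `f : Fin n → Fin N` and a fixed set `T`
of `k` queried inputs, the probability that the values `f(i)`, `i ∈ T`, are all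
distinct is at most `exp(-(r-1)k(k-1)/(2n))`; hence if `k ≥ c√(n/r)` for a suitable
constant `c`, a collision among the queried values occurs with probability `≥ 2/3`. -/
theorem random_rtoone_collision_probability :
    ∃ c : ℝ, 0 < c ∧ ∀ (n N r k : ℕ), 0 < n → 2 ≤ r → r ∣ n → n / r ≤ N →
      ∀ T : Finset (Fin n), T.card = k →
      ((((Finset.univ.filter (fun f : Fin n → Fin N =>
            (∀ y : Fin N, (∃ i, f i = y) →
              (Finset.univ.filter (fun i => f i = y)).card = r)
            ∧ ∀ i ∈ T, ∀ j ∈ T, f i = f j → i = j)).card : ℝ) /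
        ((Finset.univ.filter (fun f : Fin n → Fin N =>
            ∀ y : Fin N, (∃ i, f i = y) →
              (Finset.univ.filter (fun i => f i = y)).card = r)).card : ℝ))
        ≤ Real.exp (-(((r : ℝ) - 1) * (k : ℝ) * ((k : ℝ) - 1)) / (2 * (n : ℝ))))
      ∧ (c * Real.sqrt ((n : ℝ) / (r : ℝ)) ≤ (k : ℝ) →
          (2 : ℝ) / 3 ≤ 1 -
            (((Finset.univ.filter (fun f : Fin n → Fin N =>
                (∀ y : Fin N, (∃ i, f i = y) →
                  (Finset.univ.filter (fun i => f i = y)).card = r)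
                ∧ ∀ i ∈ T, ∀ j ∈ T, f i = f j → i = j)).card : ℝ) /
              ((Finset.univ.filter (fun f : Fin n → Fin N =>
                  ∀ y : Fin N, (∃ i, f i = y) →
                    (Finset.univ.filter (fun i => f i = y)).card = r)).card : ℝ))) := by
  refine ⟨4, by norm_num, fun n N r k hn hr hd _ T hT => ?_⟩
  subst hT
  have bound := card_isRToOne_injOn_div_le_exp (β := Fin N) (r := r) (by omega)
    (by rwa [Fintype.card_fin]) T
  rw [Fintype.card_fin] at bound
  refine ⟨?bound, two_thirds_le_one_sub_of_le_exp hn hr hd ?bound⟩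
  -- The sets agree; only their `Decidable` instances differ (`Fin` has its own for `∀`, `∃`).
  convert bound using 4 <;> ext <;> simp [IsRToOne]
end

section
/- Let Q(m, g) be a real polynomial in two variables of total degree d such that: (1) 0 ≤ Q(m, g) ≤ 1 for all integer pairs (m,g) with 1 ≤ g ≤ n, g ∣ m, 0 ≤ m ≤ n; (2) Q(n, 1) ≥ 2/3 and Q(n, r) ≤ 1/3. Then d = Ω((n/r)^{1/4}). -/
set_option maxHeartbeats 1000000

open Polynomial Set

namespace SRPB

noncomputable def node (d k : ℕ) : ℝ := Real.cos (k * Real.pi / d)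

lemma cos_nat_mul_pi (k : ℕ) : Real.cos (k * Real.pi) = (-1 : ℝ)^k := by
  induction k with
  | zero => simp
  | succ m ih =>
      push_cast
      rw [add_mul, one_mul, Real.cos_add_pi, ih]
      ring

lemma node_mem {d k : ℕ} : node d k ∈ Icc (-1:ℝ) 1 :=
  ⟨Real.neg_one_le_cos _, Real.cos_le_one _⟩

lemma node_zero {d : ℕ} : node d 0 = 1 := by simp [node]

lemma node_lt {d : ℕ} (hd : 0 < d) {k l : ℕ} (hkl : k < l) (hl : l ≤ d) :
    node d l < node d k := by
  have hπ := Real.pi_pos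
  have hd' : (0:ℝ) < d := by exact_mod_cast hd
  have hk : (k:ℝ) ≤ d := by exact_mod_cast (hkl.le.trans hl)
  have hl' : (l : ℝ) ≤ d := by exact_mod_cast hl
  have hkl' : (k:ℝ) < l := by exact_mod_cast hkl
  apply Real.strictAntiOn_cos
  · constructor
    · positivity
    · rw [div_le_iff₀ hd']; nlinarith
  · constructor
    · positivity
    · rw [div_le_iff₀ hd']; nlinarith
  · rw [div_lt_div_iff₀ hd' hd']
    have := mul_lt_mul_of_pos_right (mul_lt_mul_of_pos_right hkl' hπ) hd'
    linarith

lemma node_le {d : ℕ} (hd : 0 < d) {k l : ℕ} (hkl : k ≤ l) (hl : l ≤ d) :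
    node d l ≤ node d k := by
  rcases eq_or_lt_of_le hkl with rfl | h
  · exact le_refl _
  · exact (node_lt hd h hl).le

lemma T_eval_node {d : ℕ} (hd : 0 < d) (k : ℕ) :
    (Polynomial.Chebyshev.T ℝ d).eval (node d k) = (-1:ℝ)^k := by
  have hd' : (d:ℝ) ≠ 0 := by positivity
  rw [node, Polynomial.Chebyshev.T_real_cos]
  rw [show ((d:ℤ):ℝ) * ((k:ℝ) * Real.pi / d) = k * Real.pi by push_cast; field_simp]
  exact cos_nat_mul_pi k


lemma pair_induction {P : ℕ → Prop} (h0 : P 0) (h1 : P 1)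
    (hstep : ∀ k, P k → P (k+1) → P (k+2)) : ∀ d, P d := by
  have key : ∀ d, P d ∧ P (d+1) := by
    intro d
    induction d with
    | zero => exact ⟨h0, h1⟩
    | succ m ih => exact ⟨ih.2, hstep m ih.1 ih.2⟩
  exact fun d => (key d).1

lemma T_cast_rec (k : ℕ) :
    Polynomial.Chebyshev.T ℝ ((k+2:ℕ):ℤ)
      = 2 * X * Polynomial.Chebyshev.T ℝ ((k+1:ℕ):ℤ) - Polynomial.Chebyshev.T ℝ (k:ℤ) := by
  have h2 : ((k+2:ℕ):ℤ) = (k:ℤ) + 2 := by push_cast; ring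
  have h1 : ((k+1:ℕ):ℤ) = (k:ℤ) + 1 := by push_cast; ring
  rw [h2, h1, Polynomial.Chebyshev.T_add_two]

lemma T_natDegree_le : ∀ d : ℕ, (Polynomial.Chebyshev.T ℝ d).natDegree ≤ d := by
  apply pair_induction
  · simp [Polynomial.Chebyshev.T_zero]
  · simp [Polynomial.Chebyshev.T_one]
  · intro k ih1 ih2
    rw [T_cast_rec k]
    refine (natDegree_sub_le _ _).trans ?_
    refine max_le ?_ (ih1.trans (by omega))
    refine (natDegree_mul_le).trans ?_
    have h1 : (2 * X : ℝ[X]).natDegree ≤ 1 := by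
      refine (natDegree_mul_le).trans ?_
      simp
    omega

lemma T_eval_one : ∀ d : ℕ, (Polynomial.Chebyshev.T ℝ d).eval 1 = 1 := by
  apply pair_induction
  · simp [Polynomial.Chebyshev.T_zero]
  · simp [Polynomial.Chebyshev.T_one]
  · intro k ih1 ih2
    rw [T_cast_rec k]
    rw [eval_sub, eval_mul, eval_mul, ih1, ih2]
    norm_num

lemma T_deriv_one : ∀ d : ℕ, (derivative (Polynomial.Chebyshev.T ℝ d)).eval 1 = (d:ℝ)^2 := by
  apply pair_induction
  · simp [Polynomial.Chebyshev.T_zero]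
  · simp [Polynomial.Chebyshev.T_one]
  · intro k ih1 ih2
    rw [T_cast_rec k]
    rw [derivative_sub, derivative_mul, eval_sub, eval_add, eval_mul, eval_mul]
    rw [ih1, ih2]
    have hde : (derivative (2 * X : ℝ[X])).eval 1 = 2 := by
      simp
    rw [hde, T_eval_one (k+1)]
    simp only [eval_mul, eval_X, eval_ofNat]
    push_cast
    ring

lemma T_closed_form {x : ℝ} (hx : 1 ≤ x) : ∀ d : ℕ,
    (Polynomial.Chebyshev.T ℝ d).eval x
      = ((x + Real.sqrt (x^2-1))^d + (x - Real.sqrt (x^2-1))^d)/2 := by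
  set s := Real.sqrt (x^2-1) with hs
  have hs2 : s^2 = x^2 - 1 := Real.sq_sqrt (by nlinarith)
  have hab : (x + s) * (x - s) = 1 := by nlinarith
  apply pair_induction
  · simp [Polynomial.Chebyshev.T_zero]
  · simp [Polynomial.Chebyshev.T_one]
  · intro k ih1 ih2
    rw [T_cast_rec k]
    rw [eval_sub, eval_mul, eval_mul, ih1, ih2]
    simp only [eval_ofNat, eval_X]
    linear_combination (((x+s)^k + (x-s)^k)/2) * hab



lemma T_ge_one {x : ℝ} (hx : 1 ≤ x) (d : ℕ) : 1 ≤ (Polynomial.Chebyshev.T ℝ d).eval x := by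
  rw [T_closed_form hx d]
  set s := Real.sqrt (x^2-1) with hs
  have hs0 : 0 ≤ s := Real.sqrt_nonneg _
  have hs2 : s^2 = x^2 - 1 := Real.sq_sqrt (by nlinarith)
  have hab : (x + s) * (x - s) = 1 := by nlinarith
  have ha1 : 1 ≤ x + s := by linarith
  have hb0 : 0 < x - s := by nlinarith
  have hA : 1 ≤ (x+s)^d := one_le_pow₀ ha1
  have hB : 0 < (x-s)^d := pow_pos hb0 d
  have hABmul : (x+s)^d * (x-s)^d = 1 := by
    rw [← mul_pow, hab, one_pow]
  nlinarith [sq_nonneg ((x+s)^d - 1)]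

lemma T_le_pow {x : ℝ} (hx : 1 ≤ x) (d : ℕ) :
    (Polynomial.Chebyshev.T ℝ d).eval x ≤ (x + Real.sqrt (x^2-1))^d := by
  rw [T_closed_form hx d]
  set s := Real.sqrt (x^2-1) with hs
  have hs0 : 0 ≤ s := Real.sqrt_nonneg _
  have hs2 : s^2 = x^2 - 1 := Real.sq_sqrt (by nlinarith)
  have hab : (x + s) * (x - s) = 1 := by nlinarith
  have ha1 : 1 ≤ x + s := by linarith
  have hb0 : 0 < x - s := by nlinarith
  have hb1 : x - s ≤ 1 := by nlinarith
  have hA : 1 ≤ (x+s)^d := one_le_pow₀ ha1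
  have hB : (x-s)^d ≤ 1 := pow_le_one₀ hb0.le hb1
  linarith

lemma alt {d : ℕ} (hd : 1 ≤ d) {h : ℝ[X]} (hdeg : h.natDegree ≤ d)
    (hsign : ∀ k, k ≤ d → 0 < (-1:ℝ)^k * h.eval (node d k)) :
    (∀ x : ℝ, 1 ≤ x → 0 < h.eval x) ∧ 0 < (derivative h).eval 1 := by
  have hd0 : 0 < d := hd
  have hcont : Continuous fun x : ℝ => h.eval x := h.continuous
  have h1pos : 0 < h.eval 1 := by
    have := hsign 0 (by omega)
    simpa [node_zero] using this
  have hne : h ≠ 0 := fun hh => by simp [hh] at h1pos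
  have hroot : ∀ k, k < d → ∃ z, z ∈ Ioo (node d (k+1)) (node d k) ∧ h.eval z = 0 := by
    intro k hk
    have hlt : node d (k+1) < node d k := node_lt hd0 (Nat.lt_succ_self k) (by omega)
    have hk1 := hsign k (by omega)
    have hk2 := hsign (k+1) (by omega)
    rcases Nat.even_or_odd k with he | ho
    · have e1 : (0:ℝ) < h.eval (node d k) := by
        rwa [he.neg_one_pow, one_mul] at hk1
      have e2 : h.eval (node d (k+1)) < 0 := by
        have hodd : Odd (k+1) := he.add_one
        rw [hodd.neg_one_pow, neg_one_mul] at hk2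
        linarith
      have hsub := intermediate_value_Ioo hlt.le hcont.continuousOn
      obtain ⟨z, hz, hz0⟩ := hsub ⟨e2, e1⟩
      exact ⟨z, hz, hz0⟩
    · have e1 : h.eval (node d k) < 0 := by
        rw [ho.neg_one_pow, neg_one_mul] at hk1
        linarith
      have e2 : (0:ℝ) < h.eval (node d (k+1)) := by
        have heven : Even (k+1) := ho.add_one
        rwa [heven.neg_one_pow, one_mul] at hk2
      have hsub := intermediate_value_Ioo' hlt.le hcont.continuousOn
      obtain ⟨z, hz, hz0⟩ := hsub ⟨e1, e2⟩
      exact ⟨z, hz, hz0⟩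
  set zf : ℕ → ℝ := fun k => if hk : k < d then (hroot k hk).choose else 0 with hzf
  have zf_mem : ∀ k, k < d → zf k ∈ Ioo (node d (k+1)) (node d k) ∧ h.eval (zf k) = 0 := by
    intro k hk
    simp only [hzf, dif_pos hk]
    exact (hroot k hk).choose_spec
  have zlt1 : ∀ k, k < d → zf k < 1 := by
    intro k hk
    have h1 : zf k < node d k := (zf_mem k hk).1.2
    have h2 : node d k ≤ node d 0 := node_le hd0 (Nat.zero_le k) (by omega)
    rw [node_zero] at h2
    linarith
  have zanti : ∀ k l, k < l → l < d → zf l < zf k := by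
    intro k l hkl hl
    have h1 : zf l < node d l := (zf_mem l hl).1.2
    have h2 : node d l ≤ node d (k+1) := node_le hd0 (by omega) (by omega)
    have h3 : node d (k+1) < zf k := (zf_mem k (by omega)).1.1
    linarith
  have zinj : Set.InjOn zf ↑(Finset.range d) := by
    intro a ha b hb hab
    simp only [Finset.coe_range, Set.mem_Iio] at ha hb
    rcases lt_trichotomy a b with hh | hh | hh
    · exact absurd hab (ne_of_gt (zanti a b hh hb))
    · exact hh
    · exact absurd hab (ne_of_lt (zanti b a hh ha))
  set S : Finset ℝ := (Finset.range d).image zf with hS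
  have hScard : S.card = d := by
    rw [hS, Finset.card_image_of_injOn zinj, Finset.card_range]
  have hSsub : S ⊆ h.roots.toFinset := by
    intro x hx
    rw [hS, Finset.mem_image] at hx
    obtain ⟨k, hk, rfl⟩ := hx
    rw [Multiset.mem_toFinset, mem_roots']
    exact ⟨hne, (zf_mem k (Finset.mem_range.mp hk)).2⟩
  have hdeg' : h.natDegree = d := by
    have h1 : d ≤ h.roots.toFinset.card := hScard ▸ Finset.card_le_card hSsub
    have h2 : h.roots.toFinset.card ≤ Multiset.card h.roots := h.roots.toFinset_card_le
    have h3 := h.card_roots'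
    omega
  have hSlt1 : ∀ x ∈ S, x < 1 := by
    intro x hx
    rw [hS, Finset.mem_image] at hx
    obtain ⟨k, hk, rfl⟩ := hx
    exact zlt1 k (Finset.mem_range.mp hk)
  have extra : ∀ w : ℝ, h.eval w = 0 → 1 ≤ w → False := by
    intro w hw hw1
    have hwS : w ∉ S := fun hmem => absurd hw1 (not_le.mpr (hSlt1 w hmem))
    have hsub2 : insert w S ⊆ h.roots.toFinset := by
      intro x hx
      rcases Finset.mem_insert.mp hx with rfl | hx
      · rw [Multiset.mem_toFinset, mem_roots']; exact ⟨hne, hw⟩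
      · exact hSsub hx
    have h1 : d + 1 ≤ h.roots.toFinset.card := by
      have := Finset.card_le_card hsub2
      rwa [Finset.card_insert_of_notMem hwS, hScard] at this
    have h2 : h.roots.toFinset.card ≤ Multiset.card h.roots := h.roots.toFinset_card_le
    have h3 := h.card_roots'
    omega
  have hpos : ∀ x : ℝ, 1 ≤ x → 0 < h.eval x := by
    intro x hx
    rcases lt_trichotomy (h.eval x) 0 with hneg | h0 | hp
    · exfalso
      have hx1 : 1 < x := by
        rcases eq_or_lt_of_le hx with rfl | hh
        · linarith
        · exact hh
      have hsub := intermediate_value_Ioo' hx1.le hcont.continuousOn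
      obtain ⟨w, hw, hw0⟩ := hsub ⟨hneg, h1pos⟩
      exact extra w hw0 hw.1.le
    · exact absurd hx (by exact fun hh => extra x h0 hh)
    · exact hp
  refine ⟨hpos, ?_⟩
  -- leading coefficient positive
  have hlc : 0 < h.leadingCoeff := by
    rcases lt_trichotomy h.leadingCoeff 0 with hl | hl | hl
    · exfalso
      have hdegpos : 0 < h.degree := natDegree_pos_iff_degree_pos.mp (by omega)
      have htend := Polynomial.tendsto_atBot_of_leadingCoeff_nonpos h hdegpos hl.le
      have hev : ∀ᶠ x : ℝ in Filter.atTop, h.eval x ≤ -1 := htend.eventually_le_atBot (-1)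
      obtain ⟨x, hx1, hx2⟩ := (hev.and (Filter.eventually_ge_atTop (1:ℝ))).exists
      have := hpos x hx2
      linarith
    · exact absurd hl (leadingCoeff_ne_zero.mpr hne)
    · exact hl
  have hcd : h.coeff d = h.leadingCoeff := by rw [Polynomial.leadingCoeff, hdeg']
  have hcD : (derivative h).coeff (d-1) = h.coeff d * d := by
    rw [coeff_derivative]
    have h1 : d - 1 + 1 = d := by omega
    have h2 : ((d-1 : ℕ):ℝ) + 1 = d := by
      rw [Nat.cast_sub hd]; push_cast; ring
    rw [h1, h2]
  have hcDpos : 0 < (derivative h).coeff (d-1) := by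
    rw [hcD, hcd]
    have hdr : (0:ℝ) < d := by exact_mod_cast hd0
    positivity
  have hDne : derivative h ≠ 0 := by
    intro hh
    rw [hh] at hcDpos
    simp at hcDpos
  have hdegD_lt : (derivative h).natDegree < d := by
    have := natDegree_derivative_lt (p := h) (by omega)
    omega
  have hdegD : (derivative h).natDegree = d - 1 := by
    have hle : d - 1 ≤ (derivative h).natDegree := le_natDegree_of_ne_zero (ne_of_gt hcDpos)
    omega
  have hlcD : 0 < (derivative h).leadingCoeff := by
    rw [Polynomial.leadingCoeff, hdegD]; exact hcDpos
  have hcontD : Continuous fun x : ℝ => (derivative h).eval x := (derivative h).continuous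
  have hrolle : ∀ k, k + 1 < d → ∃ w, w ∈ Ioo (zf (k+1)) (zf k) ∧ (derivative h).eval w = 0 := by
    intro k hk
    have hlt : zf (k+1) < zf k := zanti k (k+1) (Nat.lt_succ_self k) hk
    have he1 : h.eval (zf (k+1)) = 0 := (zf_mem (k+1) hk).2
    have he2 : h.eval (zf k) = 0 := (zf_mem k (by omega)).2
    obtain ⟨c, hc, hc0⟩ := exists_deriv_eq_zero hlt hcont.continuousOn (he1.trans he2.symm)
    refine ⟨c, hc, ?_⟩
    rwa [Polynomial.deriv] at hc0
  set wf : ℕ → ℝ := fun k => if hk : k + 1 < d then (hrolle k hk).choose else 0 with hwf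
  have wf_mem : ∀ k, k + 1 < d → wf k ∈ Ioo (zf (k+1)) (zf k) ∧ (derivative h).eval (wf k) = 0 := by
    intro k hk
    simp only [hwf, dif_pos hk]
    exact (hrolle k hk).choose_spec
  have wanti : ∀ k l, k < l → l + 1 < d → wf l < wf k := by
    intro k l hkl hl
    have h1 : wf l < zf l := (wf_mem l hl).1.2
    have h2 : zf l ≤ zf (k+1) := by
      rcases Nat.lt_or_ge (k+1) l with hh | hh
      · exact (zanti (k+1) l hh (by omega)).le
      · have hll : l = k + 1 := by omega
        rw [hll]
    have h3 : zf (k+1) < wf k := (wf_mem k (by omega)).1.1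
    linarith
  have winj : Set.InjOn wf ↑(Finset.range (d-1)) := by
    intro a ha b hb hab
    simp only [Finset.coe_range, Set.mem_Iio] at ha hb
    rcases lt_trichotomy a b with hh | hh | hh
    · exact absurd hab (ne_of_gt (wanti a b hh (by omega)))
    · exact hh
    · exact absurd hab (ne_of_lt (wanti b a hh (by omega)))
  set W : Finset ℝ := (Finset.range (d-1)).image wf with hW
  have hWcard : W.card = d - 1 := by
    rw [hW, Finset.card_image_of_injOn winj, Finset.card_range]
  have hWsub : W ⊆ (derivative h).roots.toFinset := by
    intro x hx
    rw [hW, Finset.mem_image] at hx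
    obtain ⟨k, hk, rfl⟩ := hx
    rw [Multiset.mem_toFinset, mem_roots']
    have hk' : k + 1 < d := by
      have := Finset.mem_range.mp hk
      omega
    exact ⟨hDne, (wf_mem k hk').2⟩
  have hWlt1 : ∀ x ∈ W, x < 1 := by
    intro x hx
    rw [hW, Finset.mem_image] at hx
    obtain ⟨k, hk, rfl⟩ := hx
    have hk' : k + 1 < d := by
      have := Finset.mem_range.mp hk
      omega
    have h1 := (wf_mem k hk').1.2
    have h2 := zlt1 k (by omega)
    linarith
  have extraD : ∀ w : ℝ, (derivative h).eval w = 0 → 1 ≤ w → False := by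
    intro w hw hw1
    have hwW : w ∉ W := fun hmem => absurd hw1 (not_le.mpr (hWlt1 w hmem))
    have hsub2 : insert w W ⊆ (derivative h).roots.toFinset := by
      intro x hx
      rcases Finset.mem_insert.mp hx with rfl | hx
      · rw [Multiset.mem_toFinset, mem_roots']; exact ⟨hDne, hw⟩
      · exact hWsub hx
    have h1 : d - 1 + 1 ≤ (derivative h).roots.toFinset.card := by
      have := Finset.card_le_card hsub2
      rwa [Finset.card_insert_of_notMem hwW, hWcard] at this
    have h2 : (derivative h).roots.toFinset.card ≤ Multiset.card (derivative h).roots :=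
      (derivative h).roots.toFinset_card_le
    have h3 := (derivative h).card_roots'
    omega
  rcases lt_trichotomy ((derivative h).eval 1) 0 with hn | h0 | hp
  · exfalso
    rcases Nat.eq_zero_or_pos (d-1) with hdd | hdd
    · have hC : derivative h = C ((derivative h).coeff 0) :=
        Polynomial.eq_C_of_natDegree_le_zero (by omega)
      rw [hC] at hn
      simp only [eval_C] at hn
      rw [hdd] at hcDpos
      linarith
    · have hdegpos : 0 < (derivative h).degree := natDegree_pos_iff_degree_pos.mp (by omega)
      have htend := Polynomial.tendsto_atTop_of_leadingCoeff_nonneg (derivative h) hdegpos hlcD.le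
      have hev : ∀ᶠ x : ℝ in Filter.atTop, 1 ≤ (derivative h).eval x :=
        htend.eventually_ge_atTop (1:ℝ)
      obtain ⟨x, hx1, hx2⟩ := (hev.and (Filter.eventually_ge_atTop (1:ℝ))).exists
      have hx1' : 1 < x := by
        rcases eq_or_lt_of_le hx2 with rfl | hh
        · linarith
        · exact hh
      have hsub := intermediate_value_Ioo hx1'.le hcontD.continuousOn
      obtain ⟨w, hw, hw0⟩ := hsub ⟨hn, by linarith⟩
      exact extraD w hw0 hw.1.le
  · exact (extraD 1 h0 le_rfl).elim
  · exact hp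

lemma ext_one_sided {d : ℕ} (hd : 1 ≤ d) {p : ℝ[X]} (hdeg : p.natDegree ≤ d) {A : ℝ}
    (hA : 0 < A) (hb : ∀ x ∈ Icc (-1:ℝ) 1, |p.eval x| ≤ A) {x₀ : ℝ} (hx₀ : 1 ≤ x₀) :
    p.eval x₀ ≤ A * (Polynomial.Chebyshev.T ℝ d).eval x₀ := by
  by_contra hgt
  push_neg at hgt
  have hT1 : 1 ≤ (Polynomial.Chebyshev.T ℝ d).eval x₀ := T_ge_one hx₀ d
  have hP : 0 < p.eval x₀ := by nlinarith
  set lam : ℝ := A * (Polynomial.Chebyshev.T ℝ d).eval x₀ / p.eval x₀ with hlam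
  have hlam0 : 0 < lam := by
    apply div_pos (by nlinarith) hP
  have hlam1 : lam < 1 := by
    rw [hlam, div_lt_one hP]; exact hgt
  set h : ℝ[X] := Polynomial.C A * Polynomial.Chebyshev.T ℝ d - Polynomial.C lam * p with hh
  have hdegh : h.natDegree ≤ d := by
    refine (natDegree_sub_le _ _).trans (max_le ?_ ?_)
    · exact (natDegree_C_mul_le _ _).trans (T_natDegree_le d)
    · exact (natDegree_C_mul_le _ _).trans hdeg
  have hsign : ∀ k, k ≤ d → 0 < (-1:ℝ)^k * h.eval (node d k) := by
    intro k hk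
    have hT := T_eval_node hd k
    have hbk := hb (node d k) node_mem
    have hev : h.eval (node d k) = A * (-1:ℝ)^k - lam * p.eval (node d k) := by
      rw [hh]; simp [hT]
    rw [hev]
    set e : ℝ := (-1:ℝ)^k with he
    have hsq : e * e = 1 := by rw [he, ← mul_pow]; norm_num
    have h2 : e * p.eval (node d k) ≤ A := by
      calc e * p.eval (node d k) ≤ |e * p.eval (node d k)| := le_abs_self _
        _ = |p.eval (node d k)| := by
            rw [abs_mul, he, abs_pow, abs_neg, abs_one, one_pow, one_mul]
        _ ≤ A := hbk
    nlinarith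
  have hposx := (alt hd hdegh hsign).1 x₀ hx₀
  have hzero : h.eval x₀ = 0 := by
    have hl : lam * p.eval x₀ = A * (Polynomial.Chebyshev.T ℝ d).eval x₀ := by
      rw [hlam]; field_simp
    rw [hh]
    simp only [eval_sub, eval_mul, eval_C]
    linarith
  linarith

lemma ext_abs {d : ℕ} (hd : 1 ≤ d) {p : ℝ[X]} (hdeg : p.natDegree ≤ d) {A : ℝ}
    (hA : 0 < A) (hb : ∀ x ∈ Icc (-1:ℝ) 1, |p.eval x| ≤ A) {x₀ : ℝ} (hx₀ : 1 ≤ x₀) :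
    |p.eval x₀| ≤ A * (Polynomial.Chebyshev.T ℝ d).eval x₀ := by
  rw [abs_le]
  constructor
  · have hdeg' : (-p).natDegree ≤ d := by rwa [natDegree_neg]
    have hb' : ∀ x ∈ Icc (-1:ℝ) 1, |(-p).eval x| ≤ A := by
      intro x hx; rw [eval_neg, abs_neg]; exact hb x hx
    have := ext_one_sided hd hdeg' hA hb' hx₀
    rw [eval_neg] at this
    linarith
  · exact ext_one_sided hd hdeg hA hb hx₀

lemma em_base {d : ℕ} (hd : 1 ≤ d) {p : ℝ[X]} (hdeg : p.natDegree ≤ d) {A : ℝ}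
    (hA : 0 < A) (hb : ∀ x ∈ Icc (-1:ℝ) 1, |p.eval x| ≤ A) :
    |(derivative p).eval 1| ≤ (d:ℝ)^2 * A := by
  have key : ∀ q : ℝ[X], q.natDegree ≤ d → (∀ x ∈ Icc (-1:ℝ) 1, |q.eval x| ≤ A) →
      (derivative q).eval 1 ≤ (d:ℝ)^2 * A := by
    intro q hqd hqb
    by_contra hgt
    push_neg at hgt
    have hc0 : 0 < (derivative q).eval 1 := lt_trans (by positivity) hgt
    set c := (derivative q).eval 1 with hcdef
    set ε : ℝ := (c - (d:ℝ)^2*A)/(2*c) with hε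
    have hd2A : 0 < c - (d:ℝ)^2*A := by rw [hcdef]; nlinarith
    have hε0 : 0 < ε := div_pos hd2A (by linarith)
    have hε1 : ε < 1 := by
      rw [hε, div_lt_one (by linarith)]
      nlinarith [sq_nonneg (d:ℝ)]
    set h : ℝ[X] := Polynomial.C A * Polynomial.Chebyshev.T ℝ d - Polynomial.C (1-ε) * q with hh
    have hdegh : h.natDegree ≤ d := by
      refine (natDegree_sub_le _ _).trans (max_le ?_ ?_)
      · exact (natDegree_C_mul_le _ _).trans (T_natDegree_le d)
      · exact (natDegree_C_mul_le _ _).trans hqd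
    have hsign : ∀ k, k ≤ d → 0 < (-1:ℝ)^k * h.eval (node d k) := by
      intro k hk
      have hT := T_eval_node hd k
      have hbk := hqb (node d k) node_mem
      have hev : h.eval (node d k) = A * (-1:ℝ)^k - (1-ε) * q.eval (node d k) := by
        rw [hh]; simp [hT]
      rw [hev]
      set e : ℝ := (-1:ℝ)^k with he
      have hsq : e * e = 1 := by rw [he, ← mul_pow]; norm_num
      have h2 : e * q.eval (node d k) ≤ A := by
        calc e * q.eval (node d k) ≤ |e * q.eval (node d k)| := le_abs_self _
          _ = |q.eval (node d k)| := by
              rw [abs_mul, he, abs_pow, abs_neg, abs_one, one_pow, one_mul]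
          _ ≤ A := hbk
      nlinarith
    have hd1 := (alt hd hdegh hsign).2
    have hder : (derivative h).eval 1 = A * (d:ℝ)^2 - (1-ε)*c := by
      rw [hh, derivative_sub, derivative_C_mul, derivative_C_mul]
      rw [eval_sub, eval_mul, eval_mul, eval_C, eval_C, T_deriv_one d, hcdef]
    rw [hder] at hd1
    have hval : (1-ε)*c = (c + (d:ℝ)^2*A)/2 := by
      rw [hε]; field_simp; ring
    nlinarith
  have h1 := key p hdeg hb
  have h2 := key (-p) (by rwa [natDegree_neg]) (by
    intro x hx; rw [eval_neg, abs_neg]; exact hb x hx)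
  rw [derivative_neg, eval_neg] at h2
  rw [abs_le]
  constructor <;> linarith

lemma em_right {d : ℕ} (hd : 1 ≤ d) {p : ℝ[X]} (hdeg : p.natDegree ≤ d) {a b A : ℝ}
    (hab : a < b) (hA : 0 < A) (hbd : ∀ x ∈ Icc a b, |p.eval x| ≤ A) :
    |(derivative p).eval b| ≤ 2*(d:ℝ)^2*A/(b-a) := by
  set φ : ℝ[X] := Polynomial.C ((a+b)/2) + Polynomial.C ((b-a)/2) * X with hφ
  have hφdeg : φ.natDegree ≤ 1 := by
    refine (natDegree_add_le _ _).trans (max_le (by simp) ?_)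
    exact (natDegree_C_mul_le _ _).trans (by simp)
  have hφeval : ∀ x : ℝ, φ.eval x = (a+b)/2 + (b-a)/2 * x := by
    intro x; rw [hφ]; simp
  have hmap : ∀ x ∈ Icc (-1:ℝ) 1, φ.eval x ∈ Icc a b := by
    intro x hx
    rw [hφeval]
    constructor
    · nlinarith [hx.1, hx.2]
    · nlinarith [hx.1, hx.2]
  set q := p.comp φ with hq
  have hqdeg : q.natDegree ≤ d := by
    refine natDegree_comp_le.trans ?_
    calc p.natDegree * φ.natDegree ≤ d * 1 := Nat.mul_le_mul hdeg hφdeg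
      _ = d := mul_one d
  have hqb : ∀ x ∈ Icc (-1:ℝ) 1, |q.eval x| ≤ A := by
    intro x hx; rw [hq, eval_comp]; exact hbd _ (hmap x hx)
  have h1 := em_base hd hqdeg hA hqb
  have hderφ : derivative φ = Polynomial.C ((b-a)/2) := by
    rw [hφ]; simp
  have hder : (derivative q).eval 1 = (b-a)/2 * (derivative p).eval b := by
    rw [hq, derivative_comp, eval_mul, eval_comp, hφeval, hderφ, eval_C]
    have hb' : (a+b)/2 + (b-a)/2 * 1 = b := by ring
    rw [hb']
  rw [hder, abs_mul, abs_of_pos (by linarith : (0:ℝ) < (b-a)/2)] at h1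
  rw [le_div_iff₀ (by linarith : (0:ℝ) < b - a)]
  nlinarith

lemma em_left {d : ℕ} (hd : 1 ≤ d) {p : ℝ[X]} (hdeg : p.natDegree ≤ d) {a b A : ℝ}
    (hab : a < b) (hA : 0 < A) (hbd : ∀ x ∈ Icc a b, |p.eval x| ≤ A) :
    |(derivative p).eval a| ≤ 2*(d:ℝ)^2*A/(b-a) := by
  set pr := p.comp (-X) with hpr
  have hprdeg : pr.natDegree ≤ d := by
    refine natDegree_comp_le.trans ?_
    have : (-X : ℝ[X]).natDegree = 1 := by simp
    rw [this, mul_one]; exact hdeg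
  have hprb : ∀ x ∈ Icc (-b) (-a), |pr.eval x| ≤ A := by
    intro x hx
    rw [hpr, eval_comp]
    simp only [eval_neg, eval_X]
    exact hbd _ ⟨by linarith [hx.2], by linarith [hx.1]⟩
  have h1 := em_right hd hprdeg (show -b < -a by linarith) hA hprb
  have hder : (derivative pr).eval (-a) = -((derivative p).eval a) := by
    rw [hpr, derivative_comp]
    simp
  rw [hder, abs_neg] at h1
  have heq : -a - -b = b - a := by ring
  rwa [heq] at h1

lemma im {d : ℕ} (hd : 1 ≤ d) {p : ℝ[X]} (hdeg : p.natDegree ≤ d) {M A : ℝ}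
    (hM : 0 < M) (hA : 0 < A) (hbd : ∀ y ∈ Icc (0:ℝ) M, |p.eval y| ≤ A) :
    ∀ x ∈ Icc (0:ℝ) M, |(derivative p).eval x| ≤ 4*(d:ℝ)^2*A/M := by
  intro x hx
  have harith : 2*(d:ℝ)^2*A/(M/2) = 4*(d:ℝ)^2*A/M := by
    field_simp
    ring
  rcases le_or_gt x (M/2) with hh | hh
  · have h1 := em_left hd hdeg (show x < x + M/2 by linarith) hA (fun y hy =>
      hbd y ⟨by linarith [hy.1, hx.1], by linarith [hy.2]⟩)
    have : x + M/2 - x = M/2 := by ring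
    rw [this, harith] at h1
    exact h1
  · have h1 := em_right hd hdeg (show x - M/2 < x by linarith) hA (fun y hy =>
      hbd y ⟨by linarith [hy.1, hx.1], by linarith [hy.2, hx.2]⟩)
    have : x - (x - M/2) = M/2 := by ring
    rw [this, harith] at h1
    exact h1

lemma diff_bound {p : ℝ[X]} {a b B : ℝ}
    (hB : ∀ y ∈ Icc a b, |(derivative p).eval y| ≤ B)
    {u v : ℝ} (hu : u ∈ Icc a b) (hv : v ∈ Icc a b) :
    |p.eval u - p.eval v| ≤ B * |u - v| := by
  have := Convex.norm_image_sub_le_of_norm_hasDerivWithin_le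
    (f := fun x : ℝ => p.eval x) (f' := fun x : ℝ => (derivative p).eval x)
    (fun x hx => (p.hasDerivAt x).hasDerivWithinAt)
    (fun x hx => by rw [Real.norm_eq_abs]; exact hB x hx)
    (convex_Icc a b) hv hu
  simpa [Real.norm_eq_abs] using this

lemma ez {d M : ℕ} (hd : 1 ≤ d) (hM : 4*d^2 ≤ M) {p : ℝ[X]} (hdeg : p.natDegree ≤ d)
    {A : ℝ} (hA : 0 ≤ A) (hbd : ∀ t : ℕ, t ≤ M → |p.eval (t:ℝ)| ≤ A) :
    ∀ x ∈ Icc (0:ℝ) (M:ℝ), |p.eval x| ≤ 2*A := by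
  have hd2 : 1 ≤ d^2 := Nat.one_le_pow _ _ hd
  have hM0 : 0 < M := by omega
  have hMr : (0:ℝ) < M := by exact_mod_cast hM0
  obtain ⟨z, hz, hzmax⟩ := isCompact_Icc.exists_isMaxOn
    (⟨0, le_refl _, by positivity⟩ : (Icc (0:ℝ) (M:ℝ)).Nonempty)
    ((continuous_abs.comp p.continuous).continuousOn)
  set S := |p.eval z| with hSdef
  have hmax : ∀ x ∈ Icc (0:ℝ) (M:ℝ), |p.eval x| ≤ S := by
    intro x hx
    exact hzmax hx
  intro x hx
  refine (hmax x hx).trans ?_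
  rcases le_or_gt S 0 with hS0 | hS0
  · linarith
  obtain ⟨i, hiM, hdist⟩ : ∃ i : ℕ, i ≤ M ∧ |z - i| ≤ 1/2 := by
    set j := ⌊z⌋₊ with hj
    have hj1 : (j:ℝ) ≤ z := Nat.floor_le hz.1
    have hj2 : z < j + 1 := Nat.lt_floor_add_one z
    have hjM : j ≤ M := by
      have h1 : (j:ℝ) ≤ (M:ℝ) := le_trans hj1 hz.2
      exact_mod_cast h1
    rcases le_or_gt (z - j) (1/2) with hc | hc
    · exact ⟨j, hjM, by rw [abs_of_nonneg (by linarith)]; linarith⟩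
    · refine ⟨j+1, ?_, ?_⟩
      · by_contra hcon
        have hjM' : j = M := by omega
        have : z ≤ (j:ℝ) := by rw [hjM']; exact hz.2
        linarith
      · push_cast
        rw [abs_of_nonpos (by linarith)]
        linarith
  have hder := im hd hdeg hMr hS0 hmax
  have hdiff := diff_bound (u := z) (v := (i:ℝ)) hder hz ⟨by positivity, by exact_mod_cast hiM⟩
  have hSi := hbd i hiM
  have h4d : (4:ℝ)*(d:ℝ)^2 ≤ (M:ℝ) := by exact_mod_cast hM
  have e1 : |p.eval z - p.eval (i:ℝ)| ≤ 4*(d:ℝ)^2*S/(M:ℝ) * (1/2) :=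
    le_trans hdiff (mul_le_mul_of_nonneg_left hdist (by positivity))
  have e2 : 4*(d:ℝ)^2*S/(M:ℝ) ≤ S := by
    rw [div_le_iff₀ hMr]
    nlinarith
  nlinarith [abs_sub_abs_le_abs_sub (p.eval z) (p.eval (i:ℝ))]

lemma growth {d M : ℕ} (hd : 1 ≤ d) (hM : 64*d^2 ≤ M) {p : ℝ[X]} (hdeg : p.natDegree ≤ d)
    {A : ℝ} (hA : 0 < A) (hbd : ∀ y ∈ Icc (0:ℝ) (M:ℝ), |p.eval y| ≤ A) :
    ∀ x ∈ Icc (M:ℝ) ((M:ℝ)+1), |p.eval x| ≤ 2*A := by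
  intro x hx
  have hd2 : 1 ≤ d^2 := Nat.one_le_pow _ _ hd
  have hM0 : 0 < M := by omega
  have hMr : (0:ℝ) < M := by exact_mod_cast hM0
  have hdr : (1:ℝ) ≤ d := by exact_mod_cast hd
  have hMd : (64:ℝ)*(d:ℝ)^2 ≤ (M:ℝ) := by exact_mod_cast hM
  have hM64 : (64:ℝ) ≤ (M:ℝ) := by nlinarith
  set φ : ℝ[X] := Polynomial.C ((M:ℝ)/2) + Polynomial.C ((M:ℝ)/2) * X with hφ
  have hφdeg : φ.natDegree ≤ 1 := by
    refine (natDegree_add_le _ _).trans (max_le (by simp) ?_)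
    exact (natDegree_C_mul_le _ _).trans (by simp)
  have hφeval : ∀ y : ℝ, φ.eval y = (M:ℝ)/2 + (M:ℝ)/2 * y := by
    intro y; rw [hφ]; simp
  set q := p.comp φ with hq
  have hqdeg : q.natDegree ≤ d := by
    refine natDegree_comp_le.trans ?_
    calc p.natDegree * φ.natDegree ≤ d * 1 := Nat.mul_le_mul hdeg hφdeg
      _ = d := mul_one d
  have hqb : ∀ y ∈ Icc (-1:ℝ) 1, |q.eval y| ≤ A := by
    intro y hy
    rw [hq, eval_comp]
    refine hbd _ ?_
    rw [hφeval]
    constructor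
    · nlinarith [hy.1, hy.2]
    · nlinarith [hy.1, hy.2]
  set x₀ : ℝ := 2*x/(M:ℝ) - 1 with hx₀
  clear_value x₀
  have hx₀1 : 1 ≤ x₀ := by
    rw [hx₀, le_sub_iff_add_le, le_div_iff₀ hMr]
    nlinarith [hx.1]
  have hx₀2 : x₀ ≤ 1 + 2/(M:ℝ) := by
    have hinv : (2:ℝ)/(M:ℝ) * (M:ℝ) = 2 := by field_simp
    rw [hx₀, sub_le_iff_le_add, div_le_iff₀ hMr]
    nlinarith [hx.2]
  have hqx : q.eval x₀ = p.eval x := by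
    have hMne : (M:ℝ) ≠ 0 := ne_of_gt hMr
    rw [hq, eval_comp, hφeval]
    congr 1
    rw [hx₀]
    field_simp
    ring
  have h1 := ext_abs hd hqdeg hA hqb hx₀1
  have hT2 : (Polynomial.Chebyshev.T ℝ d).eval x₀ ≤ 2 := by
    refine (T_le_pow hx₀1 d).trans ?_
    have h2M : (2:ℝ)/(M:ℝ) ≤ 1/(3*(d:ℝ)) := by
      rw [div_le_div_iff₀ hMr (by positivity)]
      nlinarith
    have hsq : x₀^2 - 1 ≤ (1/(3*(d:ℝ)))^2 := by
      have e1 : x₀ - 1 ≤ 2/(M:ℝ) := by linarith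
      have e2 : x₀ + 1 ≤ 3 := by
        have h2M1 : (2:ℝ)/(M:ℝ) ≤ 1 := by
          rw [div_le_one hMr]; linarith
        linarith [hx₀2, h2M1]
      have e3 : (0:ℝ) ≤ x₀ - 1 := by linarith
      have e4 : x₀^2 - 1 = (x₀-1)*(x₀+1) := by ring
      have e5 : (x₀-1)*(x₀+1) ≤ 2/(M:ℝ) * 3 := by
        apply mul_le_mul e1 e2 (by linarith) (by positivity)
      have e6 : (2:ℝ)/(M:ℝ) * 3 ≤ 6/(64*(d:ℝ)^2) := by
        rw [div_mul_eq_mul_div, div_le_div_iff₀ hMr (by positivity)]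
        nlinarith
      have e7 : (6:ℝ)/(64*(d:ℝ)^2) ≤ (1/(3*(d:ℝ)))^2 := by
        rw [div_pow, one_pow, div_le_div_iff₀ (by positivity) (by positivity)]
        nlinarith
      linarith
    have hs : Real.sqrt (x₀^2-1) ≤ 1/(3*(d:ℝ)) := by
      calc Real.sqrt (x₀^2-1) ≤ Real.sqrt ((1/(3*(d:ℝ)))^2) := Real.sqrt_le_sqrt hsq
        _ = 1/(3*(d:ℝ)) := Real.sqrt_sq (by positivity)
    have hy : x₀ + Real.sqrt (x₀^2 - 1) ≤ 1 + 2/(3*(d:ℝ)) := by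
      have : x₀ ≤ 1 + 1/(3*(d:ℝ)) := le_trans hx₀2 (by linarith)
      have h23 : 1/(3*(d:ℝ)) + 1/(3*(d:ℝ)) = 2/(3*(d:ℝ)) := by ring
      linarith
    have hy0 : (0:ℝ) ≤ x₀ + Real.sqrt (x₀^2-1) := by
      have := Real.sqrt_nonneg (x₀^2-1)
      linarith
    calc (x₀ + Real.sqrt (x₀^2-1))^d ≤ (1 + 2/(3*(d:ℝ)))^d := pow_le_pow_left₀ hy0 hy d
      _ ≤ Real.exp (2/(3*(d:ℝ)))^d := by
          apply pow_le_pow_left₀ (by positivity)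
          linarith [Real.add_one_le_exp (2/(3*(d:ℝ)))]
      _ = Real.exp ((d:ℝ) * (2/(3*(d:ℝ)))) := by rw [← Real.exp_nat_mul]
      _ = Real.exp (2/3) := by
          congr 1
          field_simp
      _ ≤ 2 := by
          have h3 : Real.exp (2/3)^(3:ℕ) = Real.exp 2 := by
            rw [← Real.exp_nat_mul]; norm_num
          have he2 : Real.exp 2 ≤ 8 := by
            have hexp1 := Real.exp_one_lt_d9
            calc Real.exp 2 = Real.exp 1 ^ (2:ℕ) := by rw [← Real.exp_nat_mul]; norm_num
              _ ≤ (2.7182818286:ℝ)^(2:ℕ) := by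
                  apply pow_le_pow_left₀ (Real.exp_pos 1).le hexp1.le
              _ ≤ 8 := by norm_num
          have h8 : Real.exp (2/3)^(3:ℕ) ≤ 2^(3:ℕ) := by rw [h3]; norm_num; linarith
          exact le_of_pow_le_pow_left₀ (by norm_num) (by norm_num) h8
  calc |p.eval x| = |q.eval x₀| := by rw [hqx]
    _ ≤ A * (Polynomial.Chebyshev.T ℝ d).eval x₀ := h1
    _ ≤ A * 2 := by nlinarith
    _ = 2*A := by ring

lemma eval_aeval (f : Fin 2 → ℝ[X]) (Q : MvPolynomial (Fin 2) ℝ) (t : ℝ) :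
    (MvPolynomial.aeval f Q).eval t = MvPolynomial.eval (fun i => (f i).eval t) Q := by
  induction Q using MvPolynomial.induction_on with
  | C a => simp
  | add p q hp hq => simp [hp, hq]
  | mul_X p i hp => simp [hp]

lemma natDegree_aeval_le (f : Fin 2 → ℝ[X]) (hf : ∀ i, (f i).natDegree ≤ 1)
    (Q : MvPolynomial (Fin 2) ℝ) : (MvPolynomial.aeval f Q).natDegree ≤ Q.totalDegree := by
  classical
  rw [MvPolynomial.aeval_def, MvPolynomial.eval₂_eq]
  refine natDegree_sum_le_of_forall_le _ _ ?_
  intro s hs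
  have h0 : algebraMap ℝ ℝ[X] (MvPolynomial.coeff s Q)
      = Polynomial.C (MvPolynomial.coeff s Q) := rfl
  rw [h0]
  refine (natDegree_C_mul_le _ _).trans ?_
  refine (natDegree_prod_le _ _).trans ?_
  calc ∑ i ∈ s.support, ((f i)^(s i)).natDegree
      ≤ ∑ i ∈ s.support, s i := by
        apply Finset.sum_le_sum
        intro i _
        refine natDegree_pow_le.trans ?_
        calc s i * (f i).natDegree ≤ s i * 1 := Nat.mul_le_mul_left _ (hf i)
          _ = s i := mul_one _
    _ ≤ Q.totalDegree := by
        have := MvPolynomial.le_totalDegree hs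
        simpa [Finsupp.sum] using this

end SRPB

open SRPB

/-- Core polynomial statement behind the small-range collision lower bound: a bivariate
real polynomial of total degree `d` bounded in `[0, 1]` at the valid integer pairs
`(m, g)` (`1 ≤ g ≤ n`, `g ∣ m`, `m ≤ n`) with `Q(n, 1) ≥ 2/3` and `Q(n, r) ≤ 1/3`
satisfies `d = Ω((n/r)^{1/4})`. -/
theorem small_range_polynomial_degree_bound :
    ∃ C : ℝ, 0 < C ∧ ∀ (n r : ℕ) (Q : MvPolynomial (Fin 2) ℝ),
      2 ≤ r → r ∣ n →
      (∀ m g : ℕ, 1 ≤ g → g ≤ n → g ∣ m → m ≤ n →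
        0 ≤ MvPolynomial.eval ![(m : ℝ), (g : ℝ)] Q ∧
          MvPolynomial.eval ![(m : ℝ), (g : ℝ)] Q ≤ 1) →
      (2 : ℝ) / 3 ≤ MvPolynomial.eval ![(n : ℝ), 1] Q →
      MvPolynomial.eval ![(n : ℝ), (r : ℝ)] Q ≤ 1 / 3 →
      C * ((n : ℝ) / (r : ℝ)) ^ ((1 : ℝ) / 4) ≤ (Q.totalDegree : ℝ) := by
  refine ⟨1/10, by norm_num, ?_⟩
  intro n r Q hr2 hrdvd hbQ h23 h13
  set d := Q.totalDegree with hd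
  rcases Nat.eq_zero_or_pos n with rfl | hn0
  · rw [Nat.cast_zero, zero_div, Real.zero_rpow (by norm_num), mul_zero]
    positivity
  have hrn : r ≤ n := Nat.le_of_dvd hn0 hrdvd
  have hr0 : 0 < r := by omega
  set q : Polynomial ℝ := MvPolynomial.aeval ![Polynomial.C (n:ℝ), Polynomial.X] Q with hq
  have hqdeg : q.natDegree ≤ d := by
    refine natDegree_aeval_le _ ?_ Q
    intro i
    fin_cases i <;> simp
  have hqev : ∀ x : ℝ, q.eval x = MvPolynomial.eval ![(n:ℝ), x] Q := by
    intro x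
    have hv : (fun i => (![Polynomial.C (n:ℝ), Polynomial.X] i).eval x) = ![(n:ℝ), x] := by
      funext i
      fin_cases i <;> simp
    rw [hq, eval_aeval, hv]
  have hd1 : 1 ≤ d := by
    by_contra hcon
    have hd0 : q.natDegree = 0 := by omega
    obtain ⟨c, hc⟩ := Polynomial.natDegree_eq_zero.mp hd0
    have e1 : q.eval 1 = c := by rw [← hc]; simp
    have e2 : q.eval (r:ℝ) = c := by rw [← hc]; simp
    rw [hqev] at e1 e2
    rw [e1] at h23
    rw [e2] at h13
    linarith
  have hd2 : 1 ≤ d^2 := Nat.one_le_pow _ _ hd1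
  have hdR : (1:ℝ) ≤ d := by exact_mod_cast hd1
  have hrR : (2:ℝ) ≤ r := by exact_mod_cast hr2
  have key : (n:ℝ) ≤ 10000 * r * (d:ℝ)^4 := by
    by_contra hgt
    push_neg at hgt
    have hnat : 10000 * r * d^4 < n := by
      have h' : ((10000 * r * d^4 : ℕ) : ℝ) < (n:ℝ) := by push_cast; linarith
      exact_mod_cast h'
    set G : ℕ := n / (64*d^2) with hG
    have hd2pos : 0 < 64*d^2 := by positivity
    have hG1 : 156*r*d^2 ≤ G := by
      rw [hG, Nat.le_div_iff_mul_le hd2pos]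
      calc 156*r*d^2 * (64*d^2) = 9984*(r*d^4) := by ring
        _ ≤ 10000*(r*d^4) := Nat.mul_le_mul_right _ (by norm_num)
        _ = 10000*r*d^4 := by ring
        _ ≤ n := le_of_lt hnat
    have hGn : G ≤ n := Nat.div_le_self _ _
    have hrd2 : 2 ≤ r*d^2 := le_trans (by omega) (Nat.mul_le_mul hr2 hd2)
    have hG2r : 2*r ≤ G := by
      refine le_trans ?_ hG1
      have h1 : 2*r ≤ 156*r := Nat.mul_le_mul_right r (by norm_num)
      calc 2*r = 2*r*1 := (mul_one _).symm
        _ ≤ 156*r*d^2 := Nat.mul_le_mul h1 hd2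
    have hq4 : ∀ g : ℕ, 1 ≤ g → g ≤ G → |q.eval (g:ℝ)| ≤ 4 := by
      intro g hg1 hgG
      have hgn : g ≤ n := le_trans hgG hGn
      have hg0 : 0 < g := hg1
      have hgR : (0:ℝ) < g := by exact_mod_cast hg0
      set Mg : ℕ := n / g with hMg
      have hMg64 : 64*d^2 ≤ Mg := by
        rw [hMg, Nat.le_div_iff_mul_le hg0]
        calc 64*d^2*g ≤ 64*d^2*G := Nat.mul_le_mul_left _ hgG
          _ ≤ n := by
              rw [hG]
              rw [mul_comm]
              exact Nat.div_mul_le_self _ _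
      set pg : Polynomial ℝ :=
        MvPolynomial.aeval ![Polynomial.C (g:ℝ) * Polynomial.X, Polynomial.C (g:ℝ)] Q with hpg
      have hpgdeg : pg.natDegree ≤ d := by
        refine natDegree_aeval_le _ ?_ Q
        intro i
        fin_cases i
        · simpa using (natDegree_C_mul_le (g:ℝ) Polynomial.X).trans (by simp)
        · simp
      have hpgev : ∀ x : ℝ, pg.eval x = MvPolynomial.eval ![(g:ℝ)*x, (g:ℝ)] Q := by
        intro x
        have hv : (fun i => (![Polynomial.C (g:ℝ) * Polynomial.X, Polynomial.C (g:ℝ)] i).eval x)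
            = ![(g:ℝ)*x, (g:ℝ)] := by
          funext i
          fin_cases i <;> simp
        rw [hpg, eval_aeval, hv]
      have hsample : ∀ t : ℕ, t ≤ Mg → |pg.eval (t:ℝ)| ≤ 1 := by
        intro t ht
        have htg : t*g ≤ n := by
          calc t*g ≤ Mg*g := Nat.mul_le_mul_right _ ht
            _ ≤ n := by rw [hMg]; exact Nat.div_mul_le_self _ _
        have hb := hbQ (t*g) g hg1 hgn ⟨t, by ring⟩ htg
        have hvec : (![(g:ℝ)*(t:ℝ), (g:ℝ)] : Fin 2 → ℝ) = ![((t*g : ℕ):ℝ), ((g:ℕ):ℝ)] := by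
          funext i
          fin_cases i
          · show (g:ℝ)*(t:ℝ) = ((t*g : ℕ):ℝ)
            push_cast
            ring
          · rfl
        rw [hpgev, hvec]
        rw [abs_le]
        constructor <;> linarith [hb.1, hb.2]
      have hez := ez hd1 (show 4*d^2 ≤ Mg by omega) hpgdeg (by norm_num : (0:ℝ) ≤ 1) hsample
      have hgr := growth hd1 hMg64 hpgdeg (show (0:ℝ) < 2*1 by norm_num) hez
      have hqg : q.eval (g:ℝ) = pg.eval ((n:ℝ)/g) := by
        rw [hqev, hpgev]
        have hvv : (![(n:ℝ), (g:ℝ)] : Fin 2 → ℝ) = ![(g:ℝ)*((n:ℝ)/g), (g:ℝ)] := by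
          funext i
          fin_cases i
          · show (n:ℝ) = (g:ℝ) * ((n:ℝ)/g)
            field_simp
          · rfl
        rw [hvv]
      have hmem : (n:ℝ)/g ∈ Icc ((Mg:ℝ)) ((Mg:ℝ)+1) := by
        constructor
        · rw [le_div_iff₀ hgR]
          exact_mod_cast Nat.div_mul_le_self n g
        · rw [div_le_iff₀ hgR]
          have hmod := Nat.div_add_mod n g
          have hmlt : n % g < g := Nat.mod_lt _ hg0
          have : (n:ℝ) = (g:ℝ)*(Mg:ℝ) + ((n % g : ℕ):ℝ) := by
            rw [hMg]
            exact_mod_cast (hmod.symm)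
          have hmR : ((n % g : ℕ):ℝ) < g := by exact_mod_cast hmlt
          nlinarith
      have h2 := hgr ((n:ℝ)/g) hmem
      rw [hqg]
      linarith
    set q1 := q.comp (Polynomial.X + Polynomial.C 1) with hq1
    have hq1deg : q1.natDegree ≤ d := by
      refine natDegree_comp_le.trans ?_
      have hx1 : (Polynomial.X + Polynomial.C (1:ℝ)).natDegree ≤ 1 :=
        (natDegree_add_le _ _).trans (max_le (by simp) (by simp))
      calc q.natDegree * (Polynomial.X + Polynomial.C (1:ℝ)).natDegree ≤ d*1 :=
            Nat.mul_le_mul hqdeg hx1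
        _ = d := mul_one d
    have hq1ev : ∀ x : ℝ, q1.eval x = q.eval (x+1) := by
      intro x; rw [hq1, eval_comp]; simp
    have hq1b : ∀ t : ℕ, t ≤ G-1 → |q1.eval (t:ℝ)| ≤ 4 := by
      intro t ht
      rw [hq1ev]
      have hcast : ((t:ℝ)+1) = ((t+1 : ℕ):ℝ) := by push_cast; ring
      rw [hcast]
      exact hq4 (t+1) (by omega) (by omega)
    have hG1' : 4*d^2 ≤ G-1 := by
      have h5 : 5*d^2 ≤ 156*r*d^2 := by
        apply Nat.mul_le_mul_right
        omega
      omega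
    have hezq := ez hd1 hG1' hq1deg (by norm_num : (0:ℝ) ≤ 4) hq1b
    have hGcast : ((G-1:ℕ):ℝ) = (G:ℝ) - 1 := by
      have hG1le : 1 ≤ G := by omega
      push_cast [Nat.cast_sub hG1le]
      ring
    have hqb8 : ∀ y ∈ Icc (1:ℝ) (G:ℝ), |q.eval y| ≤ 8 := by
      intro y hy
      have h1 : y - 1 ∈ Icc (0:ℝ) ((G-1 : ℕ):ℝ) := by
        rw [hGcast]
        exact ⟨by linarith [hy.1], by linarith [hy.2]⟩
      have h2 := hezq (y-1) h1
      rw [hq1ev] at h2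
      have : y - 1 + 1 = y := by ring
      rw [this] at h2
      linarith
    have hr1 : (1:ℝ) < r := by linarith
    obtain ⟨ξ, hξmem, hξ⟩ := exists_hasDerivAt_eq_slope (fun x => q.eval x)
      (fun x => (derivative q).eval x) hr1 (q.continuous.continuousOn)
      (fun x _ => q.hasDerivAt x)
    have hq1v : 2/3 ≤ q.eval 1 := by rw [hqev]; exact h23
    have hqrv : q.eval (r:ℝ) ≤ 1/3 := by rw [hqev]; exact h13
    have hden : (0:ℝ) < (r:ℝ) - 1 := by linarith
    have hslope : (derivative q).eval ξ ≤ -(1/(3*((r:ℝ)-1))) := by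
      rw [hξ]
      rw [div_le_iff₀ hden]
      have : -(1/(3*((r:ℝ)-1))) * ((r:ℝ)-1) = -(1/3) := by
        field_simp
      rw [this]
      linarith
    have habs : 1/(3*((r:ℝ)-1)) ≤ |(derivative q).eval ξ| := by
      have h1 : 1/(3*((r:ℝ)-1)) ≤ -((derivative q).eval ξ) := by linarith
      exact le_trans h1 (neg_le_abs _)
    have hξ1 : 1 ≤ ξ := hξmem.1.le
    have hξr : ξ ≤ (r:ℝ) := hξmem.2.le
    have hGR : (156:ℝ)*r*(d:ℝ)^2 ≤ (G:ℝ) := by exact_mod_cast hG1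
    have hGr1 : (0:ℝ) < (G:ℝ)-1 := by nlinarith
    have h2rG : 2*(r:ℝ) ≤ (G:ℝ) := by exact_mod_cast hG2r
    have hmk := em_left hd1 hqdeg (show ξ < ξ + ((G:ℝ)-1)/2 by linarith)
      (show (0:ℝ) < 8 by norm_num)
      (fun y hy => hqb8 y ⟨by linarith [hy.1], by linarith [hy.2, hξr]⟩)
    have harith : ξ + ((G:ℝ)-1)/2 - ξ = ((G:ℝ)-1)/2 := by ring
    rw [harith] at hmk
    have e : 2*(d:ℝ)^2*8/(((G:ℝ)-1)/2) = 32*(d:ℝ)^2/((G:ℝ)-1) := by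
      field_simp
      ring
    rw [e] at hmk
    have h1 := le_trans habs hmk
    rw [div_le_div_iff₀ (by positivity) hGr1] at h1
    nlinarith
  have h4 : ((n:ℝ)/r) ≤ 10000*(d:ℝ)^4 := by
    rw [div_le_iff₀ (by positivity : (0:ℝ) < (r:ℝ))]
    nlinarith
  have ha0 : (0:ℝ) ≤ ((n:ℝ)/(r:ℝ)) := by positivity
  have hpow : ((((n:ℝ)/(r:ℝ)))^((1:ℝ)/4))^(4:ℕ) = (n:ℝ)/(r:ℝ) := by
    rw [← Real.rpow_natCast ((((n:ℝ)/(r:ℝ)))^((1:ℝ)/4)) 4, ← Real.rpow_mul ha0]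
    norm_num
  have hfin : ((1:ℝ)/10 * (((n:ℝ)/(r:ℝ)))^((1:ℝ)/4))^(4:ℕ) ≤ ((d:ℝ))^(4:ℕ) := by
    rw [mul_pow, hpow]
    have hc : ((1:ℝ)/10)^(4:ℕ) = 1/10000 := by norm_num
    rw [hc]
    nlinarith
  exact le_of_pow_le_pow_left₀ (by norm_num : (4:ℕ) ≠ 0) (by positivity) hfin
end

section
/- The number of r-to-one functions from Fin n to Fin N (with r ∣ n, n/r ≤ N) equals C(N, n/r) · n! / (r!)^{n/r}, and the symmetry group Sym(Fin n) × Sym(Fin N) acts transitively on the set of r-to-one functions via (σ, τ)·f = τ ∘ f ∘ σ⁻¹. -/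
open Finset

section Aux

variable {α β : Type*} [Fintype α] [DecidableEq α] [Fintype β] [DecidableEq β]

/-- Permutations preserving the fibers of `f` biject with families of fiber permutations. -/
noncomputable def stabEquiv (f : α → β) :
    {σ : Equiv.Perm α // ∀ a, f (σ a) = f a} ≃ (∀ b : β, Equiv.Perm {a // f a = b}) where
  toFun σ b := (σ.1.subtypeEquiv (fun a => by
    constructor
    · intro h; rw [σ.2 a, h]
    · intro h; rw [σ.2 a] at h; exact h) : {a // f a = b} ≃ {a // f a = b})
  invFun π := ⟨Equiv.ofFiberEquiv π, fun a => Equiv.ofFiberEquiv_map π a⟩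
  left_inv σ := by
    apply Subtype.ext
    apply Equiv.ext
    intro a
    simp [Equiv.ofFiberEquiv, Equiv.sigmaFiberEquiv]
  right_inv π := by
    funext b
    apply Equiv.ext
    rintro ⟨a, ha⟩
    subst ha
    apply Subtype.ext
    simp [Equiv.ofFiberEquiv, Equiv.sigmaFiberEquiv, Equiv.subtypeEquiv]

lemma card_stab (f : α → β) :
    Fintype.card {σ : Equiv.Perm α // ∀ a, f (σ a) = f a}
      = ∏ b : β, Nat.factorial (univ.filter (fun a => f a = b)).card := by
  rw [Fintype.card_congr (stabEquiv f), Fintype.card_pi]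
  congr 1
  funext b
  rw [Fintype.card_perm, Fintype.card_subtype]

/-- If all fibers of `f` and `g` have equal cardinalities, there is a permutation
relating them. -/
lemma exists_perm_comp (f g : α → β)
    (h : ∀ b, (univ.filter (fun a => f a = b)).card = (univ.filter (fun a => g a = b)).card) :
    ∃ σ : Equiv.Perm α, ∀ a, f (σ a) = g a := by
  have e : ∀ b, {a // g a = b} ≃ {a // f a = b} := fun b =>
    Fintype.equivOfCardEq (by rw [Fintype.card_subtype, Fintype.card_subtype, h])
  exact ⟨Equiv.ofFiberEquiv e, fun a => Equiv.ofFiberEquiv_map e a⟩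

/-- Reindexing a filter along a permutation. -/
lemma card_filter_perm (σ : Equiv.Perm α) (P : α → Prop) [DecidablePred P] :
    (univ.filter (fun a => P (σ a))).card = (univ.filter P).card := by
  rw [← Fintype.card_subtype, ← Fintype.card_subtype]
  exact Fintype.card_congr (σ.subtypeEquiv (fun a => Iff.rfl))

/-- The fibers of an `r`-to-one function. -/
lemma rtoone_fiber {r : ℕ} (f : α → β)
    (hf : ∀ y, (∃ i, f i = y) → (univ.filter (fun i => f i = y)).card = r) (y : β) :
    (univ.filter (fun i => f i = y)).card = if y ∈ univ.image f then r else 0 := by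
  split_ifs with h
  · obtain ⟨i, _, hi⟩ := mem_image.mp h
    exact hf y ⟨i, hi⟩
  · rw [card_eq_zero, filter_eq_empty_iff]
    intro i _ hi
    exact h (mem_image.mpr ⟨i, mem_univ i, hi⟩)

/-- The image of an `r`-to-one function has `card α / r` elements. -/
lemma card_image_rtoone {r : ℕ} (f : α → β)
    (hf : ∀ y, (∃ i, f i = y) → (univ.filter (fun i => f i = y)).card = r) :
    (univ.image f).card * r = Fintype.card α := by
  have h1 : (univ : Finset α).card
      = ∑ y ∈ univ.image f, (univ.filter (fun i => f i = y)).card :=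
    card_eq_sum_card_fiberwise (fun x _ => mem_image.mpr ⟨x, mem_univ x, rfl⟩)
  rw [← Finset.card_univ, h1,
    Finset.sum_congr rfl (fun y hy => by
      obtain ⟨i, _, hi⟩ := mem_image.mp hy
      exact hf y ⟨i, hi⟩),
    Finset.sum_const, smul_eq_mul]

/-- The product of factorials of fiber sizes of an `r`-to-one function. -/
lemma prod_fib_rtoone {r : ℕ} (f : α → β)
    (hf : ∀ y, (∃ i, f i = y) → (univ.filter (fun i => f i = y)).card = r) :
    (∏ y : β, Nat.factorial (univ.filter (fun i => f i = y)).card)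
      = (Nat.factorial r) ^ (univ.image f).card := by
  rw [Finset.prod_congr rfl (fun y _ => by rw [rtoone_fiber f hf y, apply_ite Nat.factorial])]
  simp only [Nat.factorial_zero]
  rw [Finset.prod_ite_mem univ (univ.image f) (fun _ => Nat.factorial r), univ_inter,
    Finset.prod_const]

end Aux

section Base

/-- The canonical `r`-to-one map `Fin n → Fin (n / r)`. -/
def baseFun (n r : ℕ) (hrn : r ∣ n) : Fin n → Fin (n / r) := fun i =>
  (finProdFinEquiv.symm (Fin.cast (Nat.div_mul_cancel hrn).symm i)).1

lemma baseFun_fiber (n r : ℕ) (hrn : r ∣ n) (j : Fin (n / r)) :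
    (univ.filter (fun i => baseFun n r hrn i = j)).card = r := by
  rw [← Fintype.card_subtype]
  have e1 : {i : Fin n // baseFun n r hrn i = j} ≃
      {p : Fin (n / r) × Fin r // p.1 = j} :=
    ((finCongr (Nat.div_mul_cancel hrn).symm).trans finProdFinEquiv.symm).subtypeEquiv
      (fun i => Iff.rfl)
  have e2 : {p : Fin (n / r) × Fin r // p.1 = j} ≃ Fin r :=
    ⟨fun p => p.1.2, fun b => ⟨(j, b), rfl⟩,
     fun p => Subtype.ext (Prod.ext p.2.symm rfl), fun b => rfl⟩
  rw [Fintype.card_congr (e1.trans e2), Fintype.card_fin]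

/-- Fibers of an order embedding composed with the base function. -/
lemma ebase_fiber (n N r : ℕ) (hrn : r ∣ n) (S : Finset (Fin N)) (hS : S.card = n / r)
    (y : Fin N) :
    (univ.filter (fun i : Fin n => S.orderEmbOfFin hS (baseFun n r hrn i) = y)).card
      = if y ∈ S then r else 0 := by
  split_ifs with h
  · have : y ∈ Set.range (S.orderEmbOfFin hS) := by
      rw [Finset.range_orderEmbOfFin]; exact h
    obtain ⟨j, hj⟩ := this
    have : ∀ i : Fin n, (S.orderEmbOfFin hS (baseFun n r hrn i) = y)
        ↔ baseFun n r hrn i = j := by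
      intro i
      rw [← hj]
      exact ⟨fun h' => (S.orderEmbOfFin hS).injective h', fun h' => by rw [h']⟩
    rw [filter_congr (fun i _ => by rw [this i]), baseFun_fiber]
  · rw [card_eq_zero, filter_eq_empty_iff]
    intro i _ hi
    exact h (hi ▸ Finset.orderEmbOfFin_mem S hS (baseFun n r hrn i))

end Base

/-- The parametrization of `r`-to-one functions by a subset and a permutation. -/
noncomputable def rtoonePhi (n N r : ℕ) (hrn : r ∣ n) (y₀ : Fin N)
    (p : Finset (Fin N) × Equiv.Perm (Fin n)) : Fin n → Fin N :=
  if h : p.1.card = n / r then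
    fun i => p.1.orderEmbOfFin h (baseFun n r hrn (p.2⁻¹ i))
  else fun _ => y₀

/-- Counting and symmetry of `r`-to-one functions: the number of `r`-to-one functions
from `Fin n` to `Fin N` (with `r ∣ n`, `n/r ≤ N`) equals `C(N, n/r) · n! / (r!)^{n/r}`
(stated multiplicatively), and `Sym(Fin n) × Sym(Fin N)` acts transitively on the set
of `r`-to-one functions via `(σ, τ) · f = τ ∘ f ∘ σ⁻¹`. -/
theorem rtoone_count_and_transitivity (n N r : ℕ) (hr : 0 < r) (hrn : r ∣ n)
    (hN : n / r ≤ N) :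
    (Finset.univ.filter (fun f : Fin n → Fin N =>
        ∀ y : Fin N, (∃ i, f i = y) →
          (Finset.univ.filter (fun i => f i = y)).card = r)).card
        * (Nat.factorial r) ^ (n / r)
      = Nat.choose N (n / r) * Nat.factorial n
    ∧ ∀ f g : Fin n → Fin N,
        (∀ y : Fin N, (∃ i, f i = y) →
          (Finset.univ.filter (fun i => f i = y)).card = r) →
        (∀ y : Fin N, (∃ i, g i = y) →
          (Finset.univ.filter (fun i => g i = y)).card = r) →
        ∃ (σ : Equiv.Perm (Fin n)) (τ : Equiv.Perm (Fin N)),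
          ∀ i : Fin n, τ (f (σ⁻¹ i)) = g i := by
  classical
  constructor
  · -- counting
    rcases Nat.eq_zero_or_pos N with hN0 | hN0
    · -- degenerate case N = 0, hence n = 0
      subst hN0
      have hk0 : n / r = 0 := Nat.le_zero.mp hN
      have hn0 : n = 0 := by
        have h2 := Nat.div_mul_cancel hrn
        rw [hk0] at h2
        omega
      subst hn0
      simp only [hk0, pow_zero, mul_one, Nat.choose_self, Nat.factorial_zero]
      have h4 : (Finset.univ.filter (fun f : Fin 0 → Fin 0 =>
          ∀ y : Fin 0, (∃ i, f i = y) →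
            (Finset.univ.filter (fun i => f i = y)).card = r)) = univ := by
        apply Finset.filter_true_of_mem
        exact fun f _ y => y.elim0
      rw [h4, Finset.card_univ]
      simp
    · -- main case
      have y₀ : Fin N := ⟨0, hN0⟩
      set k := n / r with hk
      set T := (Finset.univ.filter (fun f : Fin n → Fin N =>
        ∀ y : Fin N, (∃ i, f i = y) →
          (Finset.univ.filter (fun i => f i = y)).card = r)) with hT
      set s := (((univ : Finset (Fin N)).powersetCard k) ×ˢ (univ : Finset (Equiv.Perm (Fin n)))) with hs
      have H : ∀ p ∈ s, rtoonePhi n N r hrn y₀ p ∈ T := by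
        rintro ⟨S, σ⟩ hp
        rw [hs, mem_product, Finset.mem_powersetCard_univ] at hp
        have hS : S.card = k := hp.1
        rw [hT, mem_filter]
        refine ⟨mem_univ _, fun y hy => ?_⟩
        rw [rtoonePhi, dif_pos hS]
        rw [rtoonePhi, dif_pos hS] at hy
        obtain ⟨i, hi⟩ := hy
        have hyS : y ∈ S := hi ▸ Finset.orderEmbOfFin_mem S hS _
        rw [card_filter_perm σ⁻¹ (fun i => S.orderEmbOfFin hS (baseFun n r hrn i) = y)] at *
        rw [ebase_fiber n N r hrn S hS y, if_pos hyS]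
      have hsum := Finset.card_eq_sum_card_fiberwise H
      have hcard : s.card = N.choose k * Nat.factorial n := by
        rw [hs, Finset.card_product, Finset.card_powersetCard, Finset.card_univ,
          Fintype.card_fin, Finset.card_univ, Fintype.card_perm, Fintype.card_fin]
      have hfib : ∀ f ∈ T, (s.filter (fun p => rtoonePhi n N r hrn y₀ p = f)).card
          = (Nat.factorial r) ^ k := by
        intro f hf
        have hfr := (mem_filter.mp hf).2
        have himcard : (univ.image f).card = k := by
          have h1 := card_image_rtoone f hfr
          rw [Fintype.card_fin] at h1
          exact (Nat.div_eq_of_eq_mul_left hr h1.symm).symm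
        set e := (univ.image f).orderEmbOfFin himcard with he
        -- fibers of f agree with fibers of e ∘ base
        have hfibeq : ∀ y, (univ.filter (fun i : Fin n => e (baseFun n r hrn i) = y)).card
            = (univ.filter (fun i => f i = y)).card := by
          intro y
          rw [ebase_fiber n N r hrn _ himcard y, rtoone_fiber f hfr y]
        obtain ⟨σ₁, hσ₁⟩ := exists_perm_comp (fun i => e (baseFun n r hrn i)) f hfibeq
        have hσ₂ : ∀ j, e (baseFun n r hrn j) = f (σ₁⁻¹ j) := by
          intro j
          have := hσ₁ (σ₁⁻¹ j)
          simpa using this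
        -- the fiber of Phi over f is {image f} ×ˢ C
        have hset : s.filter (fun p => rtoonePhi n N r hrn y₀ p = f)
            = {univ.image f} ×ˢ (univ.filter
                (fun σ : Equiv.Perm (Fin n) =>
                  ∀ i, e (baseFun n r hrn (σ⁻¹ i)) = f i)) := by
          ext ⟨S, σ⟩
          simp only [hs, mem_filter, mem_product, Finset.mem_powersetCard_univ,
            mem_singleton, mem_univ, true_and, and_true]
          constructor
          · rintro ⟨hS, hPhi⟩
            rw [rtoonePhi, dif_pos hS] at hPhi
            have hSim : S = univ.image f := by
              apply (Finset.eq_of_subset_of_card_le ?_ ?_).symm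
              · intro y hy
                obtain ⟨i, -, hi⟩ := mem_image.mp hy
                rw [← hi, ← hPhi]
                exact Finset.orderEmbOfFin_mem S hS _
              · rw [himcard, hS]
            subst hSim
            refine ⟨rfl, fun i => ?_⟩
            rw [← hPhi]
          · rintro ⟨hS, hC⟩
            subst hS
            refine ⟨himcard, ?_⟩
            rw [rtoonePhi, dif_pos himcard]
            funext i
            exact hC i
        rw [hset, Finset.card_product, Finset.card_singleton, one_mul]
        -- count C via the stabilizer
        have hiff : ∀ σ : Equiv.Perm (Fin n),
            (∀ i, e (baseFun n r hrn (σ⁻¹ i)) = f i)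
              ↔ (∀ a, f ((σ₁⁻¹ * σ⁻¹) a) = f a) := by
          intro σ
          constructor
          · intro h a
            have := h a
            rw [hσ₂ (σ⁻¹ a)] at this
            simpa using this
          · intro h i
            rw [hσ₂ (σ⁻¹ i)]
            simpa using h i
        rw [← Fintype.card_subtype]
        have E : {σ : Equiv.Perm (Fin n) // ∀ i, e (baseFun n r hrn (σ⁻¹ i)) = f i}
            ≃ {π : Equiv.Perm (Fin n) // ∀ a, f (π a) = f a} :=
          Equiv.subtypeEquiv ((Equiv.inv (Equiv.Perm (Fin n))).trans
            (Equiv.mulLeft σ₁⁻¹)) (fun σ => hiff σ)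
        rw [Fintype.card_congr E]
        have hcs := card_stab f
        rw [prod_fib_rtoone f hfr, himcard] at hcs
        convert hcs using 2
      rw [Finset.sum_congr rfl hfib, Finset.sum_const, smul_eq_mul] at hsum
      rw [← hcard, hsum]
  · -- transitivity
    intro f g hf hg
    have himf : (univ.image f).card * r = n := by
      rw [card_image_rtoone f hf, Fintype.card_fin]
    have himg : (univ.image g).card * r = n := by
      rw [card_image_rtoone g hg, Fintype.card_fin]
    have e0 : {y // y ∈ univ.image f} ≃ {y // y ∈ univ.image g} :=
      Fintype.equivOfCardEq (by
        simp only [Fintype.card_coe]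
        exact Nat.eq_of_mul_eq_mul_right hr (himf.trans himg.symm))
    set τ := e0.extendSubtype with hτ
    have hmem : ∀ y, y ∈ univ.image f → τ y ∈ univ.image g :=
      fun y hy => e0.extendSubtype_mem y hy
    have hnmem : ∀ y, y ∉ univ.image f → τ y ∉ univ.image g :=
      fun y hy => e0.extendSubtype_not_mem y hy
    have hsymm : ∀ y, τ.symm y ∈ univ.image f ↔ y ∈ univ.image g := by
      intro y
      constructor
      · intro h
        have := hmem _ h
        rwa [Equiv.apply_symm_apply] at this
      · intro h
        by_contra hc
        exact hnmem _ hc (by rwa [Equiv.apply_symm_apply])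
    have hfibeq : ∀ y, (univ.filter (fun i => τ (f i) = y)).card
        = (univ.filter (fun i => g i = y)).card := by
      intro y
      have h1 : (univ.filter (fun i => τ (f i) = y)) = (univ.filter (fun i => f i = τ.symm y)) := by
        apply filter_congr
        intro i _
        rw [Equiv.eq_symm_apply]
      rw [h1, rtoone_fiber f hf, rtoone_fiber g hg]
      by_cases hy : y ∈ univ.image g
      · rw [if_pos ((hsymm y).mpr hy), if_pos hy]
      · rw [if_neg (fun hc => hy ((hsymm y).mp hc)), if_neg hy]
    obtain ⟨π, hπ⟩ := exists_perm_comp (fun i => τ (f i)) g hfibeq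
    exact ⟨π⁻¹, τ, fun i => by simpa using hπ i⟩
end
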